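/- arXiv:0904.4246 — 11 statements merged into one kernel-verified Lean document; each statement's English description precedes it below -/
import Mathlib

section
/- Define on the region U = {(ρ,θ,ψ) : ρ > 0, 0 < θ < π/2, 0 < ψ < π} the functions r(ρ,θ,ψ) = ρ² sin θ cos θ sin ψ, z¹(ρ,θ,ψ) = ρ cos θ cos ψ, and z²(ρ,θ,ψ) = ½ ρ² (cos²θ − sin²θ). Then for α = 1, 2 and all (ρ,θ,ψ) ∈ U one has ⟨∇r, ∇z^α⟩ = 0, where for smooth functions u, v on U the pairing is ⟨∇u, ∇v⟩ = (∂_ρ u)(∂_ρ v) + ρ⁻²(∂_θ u)(∂_θ v) + ρ⁻² cos⁻²θ (∂_ψ u)(∂_ψ v). -/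
open Real

/-- Partial derivative in the first variable. -/
noncomputable def pd1 (f : ℝ → ℝ → ℝ → ℝ) (ρ θ ψ : ℝ) : ℝ := deriv (fun x => f x θ ψ) ρ

/-- Partial derivative in the second variable. -/
noncomputable def pd2 (f : ℝ → ℝ → ℝ → ℝ) (ρ θ ψ : ℝ) : ℝ := deriv (fun x => f ρ x ψ) θ

/-- Partial derivative in the third variable. -/
noncomputable def pd3 (f : ℝ → ℝ → ℝ → ℝ) (ρ θ ψ : ℝ) : ℝ := deriv (fun x => f ρ θ x) ψ

/-- Inner product of gradients with respect to the orbit-space metric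
`g̃ = dρ² + ρ² dθ² + ρ² cos²θ dψ²`:
`⟨∇u, ∇v⟩ = (∂_ρ u)(∂_ρ v) + ρ⁻²(∂_θ u)(∂_θ v) + ρ⁻² cos⁻²θ (∂_ψ u)(∂_ψ v)`. -/
noncomputable def pairing (u v : ℝ → ℝ → ℝ → ℝ) (ρ θ ψ : ℝ) : ℝ :=
  pd1 u ρ θ ψ * pd1 v ρ θ ψ
    + (ρ ^ 2)⁻¹ * (pd2 u ρ θ ψ * pd2 v ρ θ ψ)
    + (ρ ^ 2)⁻¹ * ((cos θ) ^ 2)⁻¹ * (pd3 u ρ θ ψ * pd3 v ρ θ ψ)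

/-- Orthogonality `⟨∇r, ∇z^α⟩ = 0`, `α = 1,2`, for the canonical coordinates of
six-dimensional Minkowski space. -/
theorem stmt_1 (ρ θ ψ : ℝ) (hρ : 0 < ρ) (hθ0 : 0 < θ) (hθ1 : θ < π / 2)
    (hψ0 : 0 < ψ) (hψ1 : ψ < π) :
    pairing (fun ρ θ ψ => ρ ^ 2 * sin θ * cos θ * sin ψ)
        (fun ρ θ ψ => ρ * cos θ * cos ψ) ρ θ ψ = 0 ∧
    pairing (fun ρ θ ψ => ρ ^ 2 * sin θ * cos θ * sin ψ)
        (fun ρ θ _ => (1 / 2) * ρ ^ 2 * ((cos θ) ^ 2 - (sin θ) ^ 2)) ρ θ ψ = 0 := by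
  have hρ' : ρ ≠ 0 := ne_of_gt hρ
  have hc : cos θ ≠ 0 := ne_of_gt (cos_pos_of_mem_Ioo ⟨by linarith [pi_pos], hθ1⟩)
  have hr1 : pd1 (fun ρ θ ψ => ρ ^ 2 * sin θ * cos θ * sin ψ) ρ θ ψ
      = 2 * ρ * sin θ * cos θ * sin ψ := by
    unfold pd1; simp [deriv_mul_const, mul_assoc]
  have hr2 : pd2 (fun ρ θ ψ => ρ ^ 2 * sin θ * cos θ * sin ψ) ρ θ ψ
      = ρ ^ 2 * (cos θ ^ 2 - sin θ ^ 2) * sin ψ := by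
    unfold pd2
    have h : (fun x : ℝ => ρ ^ 2 * sin x * cos x * sin ψ)
        = fun x => (ρ ^ 2 * sin ψ) * (sin x * cos x) := by funext x; ring
    rw [h, deriv_const_mul _ (by fun_prop)]
    rw [deriv_fun_mul (by fun_prop) (by fun_prop)]
    simp; ring
  have hr3 : pd3 (fun ρ θ ψ => ρ ^ 2 * sin θ * cos θ * sin ψ) ρ θ ψ
      = ρ ^ 2 * sin θ * cos θ * cos ψ := by
    unfold pd3; simp [deriv_const_mul]
  have hz11 : pd1 (fun ρ θ ψ => ρ * cos θ * cos ψ) ρ θ ψ = cos θ * cos ψ := by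
    unfold pd1
    have h : (fun x : ℝ => x * cos θ * cos ψ) = fun x => (cos θ * cos ψ) * x := by
      funext x; ring
    rw [h, deriv_const_mul _ (by fun_prop)]; simp
  have hz12 : pd2 (fun ρ θ ψ => ρ * cos θ * cos ψ) ρ θ ψ = -(ρ * sin θ * cos ψ) := by
    unfold pd2
    have h : (fun x : ℝ => ρ * cos x * cos ψ) = fun x => (ρ * cos ψ) * cos x := by
      funext x; ring
    rw [h, deriv_const_mul _ (by fun_prop)]; simp; ring
  have hz13 : pd3 (fun ρ θ ψ => ρ * cos θ * cos ψ) ρ θ ψ = -(ρ * cos θ * sin ψ) := by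
    unfold pd3
    rw [deriv_const_mul _ (by fun_prop)]; simp
  have hz21 : pd1 (fun ρ θ _ : ℝ => (1 / 2) * ρ ^ 2 * ((cos θ) ^ 2 - (sin θ) ^ 2)) ρ θ ψ
      = ρ * (cos θ ^ 2 - sin θ ^ 2) := by
    unfold pd1
    have h : (fun x : ℝ => (1 / 2) * x ^ 2 * ((cos θ) ^ 2 - (sin θ) ^ 2))
        = fun x => ((1 / 2) * ((cos θ) ^ 2 - (sin θ) ^ 2)) * x ^ 2 := by funext x; ring
    rw [h, deriv_const_mul _ (by fun_prop)]; simp; ring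
  have hz22 : pd2 (fun ρ θ _ : ℝ => (1 / 2) * ρ ^ 2 * ((cos θ) ^ 2 - (sin θ) ^ 2)) ρ θ ψ
      = -(2 * ρ ^ 2 * sin θ * cos θ) := by
    unfold pd2
    have h : (fun x : ℝ => (1 / 2) * ρ ^ 2 * ((cos x) ^ 2 - (sin x) ^ 2))
        = fun x => ((1 / 2) * ρ ^ 2) * ((cos x) ^ 2 - (sin x) ^ 2) := by funext x; ring
    rw [h, deriv_const_mul _ (by fun_prop)]
    rw [deriv_fun_sub (by fun_prop) (by fun_prop)]
    rw [deriv_fun_pow (by fun_prop) _, deriv_fun_pow (by fun_prop) _]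
    simp; ring
  have hz23 : pd3 (fun ρ θ _ : ℝ => (1 / 2) * ρ ^ 2 * ((cos θ) ^ 2 - (sin θ) ^ 2)) ρ θ ψ
      = 0 := by
    unfold pd3; simp
  constructor
  · rw [pairing, hr1, hr2, hr3, hz11, hz12, hz13]
    have hs := sin_sq_add_cos_sq θ
    field_simp
    linear_combination (ρ * sin θ * sin ψ * cos ψ) * hs
  · rw [pairing, hr1, hr2, hr3, hz21, hz22, hz23]
    field_simp
    ring
end

section
/- Define on the region U = {(ρ,θ,ψ) : ρ > 0, 0 < θ < π/2, 0 < ψ < π} the functions r(ρ,θ,ψ) = ρ² sin θ cos θ sin ψ, z¹(ρ,θ,ψ) = ρ cos θ cos ψ, and z²(ρ,θ,ψ) = ½ ρ² (cos²θ − sin²θ). With the pairing ⟨∇u, ∇v⟩ = (∂_ρ u)(∂_ρ v) + ρ⁻²(∂_θ u)(∂_θ v) + ρ⁻² cos⁻²θ (∂_ψ u)(∂_ψ v), one has for all (ρ,θ,ψ) ∈ U the Gram determinant identity ⟨∇z¹,∇z¹⟩·⟨∇z²,∇z²⟩ − ⟨∇z¹,∇z²⟩² = ⟨∇r,∇r⟩.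 -/
open Real

/-- The Gram determinant identity
`⟨∇z¹,∇z¹⟩·⟨∇z²,∇z²⟩ − ⟨∇z¹,∇z²⟩² = ⟨∇r,∇r⟩` (i.e. `λ = 1`) for the canonical
coordinates of six-dimensional Minkowski space. -/
theorem stmt_3 (ρ θ ψ : ℝ) (hρ : 0 < ρ) (hθ0 : 0 < θ) (hθ1 : θ < π / 2)
    (hψ0 : 0 < ψ) (hψ1 : ψ < π) :
    pairing (fun ρ θ ψ => ρ * cos θ * cos ψ) (fun ρ θ ψ => ρ * cos θ * cos ψ) ρ θ ψ *
        pairing (fun ρ θ _ => (1 / 2) * ρ ^ 2 * ((cos θ) ^ 2 - (sin θ) ^ 2))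
          (fun ρ θ _ => (1 / 2) * ρ ^ 2 * ((cos θ) ^ 2 - (sin θ) ^ 2)) ρ θ ψ
      - (pairing (fun ρ θ ψ => ρ * cos θ * cos ψ)
          (fun ρ θ _ => (1 / 2) * ρ ^ 2 * ((cos θ) ^ 2 - (sin θ) ^ 2)) ρ θ ψ) ^ 2
      = pairing (fun ρ θ ψ => ρ ^ 2 * sin θ * cos θ * sin ψ)
          (fun ρ θ ψ => ρ ^ 2 * sin θ * cos θ * sin ψ) ρ θ ψ := by

  have hc : cos θ ≠ 0 := (Real.cos_pos_of_mem_Ioo ⟨by linarith [Real.pi_pos], hθ1⟩).ne'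
  have hρ' : ρ ≠ 0 := hρ.ne'
  simp only [pairing, pd1, pd2, pd3]
  rw [show (deriv (fun x => x * cos θ * cos ψ) ρ) = cos θ * cos ψ by
    simp [mul_assoc]]
  rw [show (deriv (fun x => ρ * cos x * cos ψ) θ) = -sin θ * ρ * cos ψ by
    have : (fun x => ρ * cos x * cos ψ) = fun x => (ρ * cos ψ) * cos x := by
      funext x; ring
    rw [this]; simp [Real.deriv_cos]; ring]
  rw [show (deriv (fun x => ρ * cos θ * cos x) ψ) = -(ρ * cos θ) * sin ψ by
    simp [Real.deriv_cos]]
  rw [show (deriv (fun x : ℝ => (1/2 : ℝ) * x ^ 2 * (cos θ ^ 2 - sin θ ^ 2)) ρ)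
      = ρ * (cos θ ^ 2 - sin θ ^ 2) by
    have : (fun x : ℝ => (1/2 : ℝ) * x ^ 2 * (cos θ ^ 2 - sin θ ^ 2))
        = fun x => ((1/2) * (cos θ ^ 2 - sin θ ^ 2)) * x ^ 2 := by funext x; ring
    rw [this, deriv_const_mul _ (by fun_prop)]; simp; ring]
  rw [show (deriv (fun x : ℝ => (1/2 : ℝ) * ρ ^ 2 * (cos x ^ 2 - sin x ^ 2)) θ)
      = (1/2) * ρ ^ 2 * (-4 * sin θ * cos θ) by
    rw [deriv_const_mul _ (by fun_prop)]
    rw [deriv_fun_sub (by fun_prop) (by fun_prop)]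
    rw [deriv_fun_pow' (by fun_prop) _, deriv_fun_pow' (by fun_prop) _]
    simp [Real.deriv_cos, Finset.sum_range_succ]; ring]
  rw [show (deriv (fun _ : ℝ => (1/2 : ℝ) * ρ ^ 2 * (cos θ ^ 2 - sin θ ^ 2)) ψ) = 0 by
    simp]
  rw [show (deriv (fun x => x ^ 2 * sin θ * cos θ * sin ψ) ρ)
      = 2 * ρ * sin θ * cos θ * sin ψ by
    have : (fun x : ℝ => x ^ 2 * sin θ * cos θ * sin ψ)
        = fun x => (sin θ * cos θ * sin ψ) * x ^ 2 := by funext x; ring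
    rw [this, deriv_const_mul _ (by fun_prop)]; simp; ring]
  rw [show (deriv (fun x => ρ ^ 2 * sin x * cos x * sin ψ) θ)
      = ρ ^ 2 * (cos θ ^ 2 - sin θ ^ 2) * sin ψ by
    have : (fun x : ℝ => ρ ^ 2 * sin x * cos x * sin ψ)
        = fun x => (ρ ^ 2 * sin ψ) * (sin x * cos x) := by funext x; ring
    rw [this, deriv_const_mul _ (by fun_prop)]
    rw [deriv_fun_mul (by fun_prop) (by fun_prop)]
    simp [Real.deriv_cos]; ring]
  rw [show (deriv (fun x => ρ ^ 2 * sin θ * cos θ * sin x) ψ)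
      = ρ ^ 2 * sin θ * cos θ * cos ψ by
    rw [deriv_const_mul _ (by fun_prop)]; simp]
  have hs : sin θ ^ 2 = 1 - cos θ ^ 2 := by
    have := Real.sin_sq_add_cos_sq θ; linarith
  have hsp : sin ψ ^ 2 = 1 - cos ψ ^ 2 := by
    have := Real.sin_sq_add_cos_sq ψ; linarith
  have h4 : sin θ ^ 4 = (1 - cos θ ^ 2) ^ 2 := by
    rw [show (4:ℕ) = 2*2 from rfl, pow_mul, hs]
  have h6 : sin θ ^ 6 = (1 - cos θ ^ 2) ^ 3 := by
    rw [show (6:ℕ) = 2*3 from rfl, pow_mul, hs]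
  field_simp
  ring_nf
  rw [h6, h4, hs]
  ring
end

section
/- Fix real numbers k, l, C and define on the region U' = {(ρ,θ,ψ) : ρ > 0, 0 < θ < π/4, 0 < ψ < π/2} the functions r(ρ,θ,ψ) = ρ² sin θ cos θ sin ψ and z(ρ,θ,ψ) = C ρ^k (cos θ)^l (cos 2θ)^{(k−l)/2} (cos ψ)^l. Then for all (ρ,θ,ψ) ∈ U', ⟨∇r, ∇z⟩ = 0, where ⟨∇u, ∇v⟩ = (∂_ρ u)(∂_ρ v) + ρ⁻²(∂_θ u)(∂_θ v) + ρ⁻² cos⁻²θ (∂_ψ u)(∂_ψ v). -/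
open Real

/-- For any real constants `k, l, C` the ansatz
`z = C ρ^k (cos θ)^l (cos 2θ)^{(k−l)/2} (cos ψ)^l` is orthogonal to
`r = ρ² sin θ cos θ sin ψ` on the region `ρ > 0`, `0 < θ < π/4`, `0 < ψ < π/2`. -/
theorem stmt_4 (k l C : ℝ) (ρ θ ψ : ℝ) (hρ : 0 < ρ) (hθ0 : 0 < θ) (hθ1 : θ < π / 4)
    (hψ0 : 0 < ψ) (hψ1 : ψ < π / 2) :
    pairing (fun ρ θ ψ => ρ ^ 2 * sin θ * cos θ * sin ψ)
        (fun ρ θ ψ =>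
          C * ρ ^ k * (cos θ) ^ l * (cos (2 * θ)) ^ ((k - l) / 2) * (cos ψ) ^ l)
        ρ θ ψ = 0 := by
  have hπ := Real.pi_pos
  have hc : 0 < cos θ := Real.cos_pos_of_mem_Ioo ⟨by linarith, by linarith⟩
  have hc2 : 0 < cos (2 * θ) := Real.cos_pos_of_mem_Ioo ⟨by linarith, by linarith⟩
  have hcψ : 0 < cos ψ := Real.cos_pos_of_mem_Ioo ⟨by linarith, by linarith⟩
  have hρ' : ρ ≠ 0 := hρ.ne'
  -- derivatives of r
  have hr1 : deriv (fun x : ℝ => x ^ 2 * sin θ * cos θ * sin ψ) ρ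
      = 2 * ρ * sin θ * cos θ * sin ψ := by
    have h := (((hasDerivAt_pow 2 ρ).mul_const (sin θ)).mul_const (cos θ)).mul_const (sin ψ)
    rw [h.deriv]; ring
  have hr2 : deriv (fun x : ℝ => ρ ^ 2 * sin x * cos x * sin ψ) θ
      = ρ ^ 2 * cos (2 * θ) * sin ψ := by
    have h := ((((hasDerivAt_sin θ).const_mul (ρ ^ 2 : ℝ)).mul (hasDerivAt_cos θ)).mul_const
      (sin ψ))
    have h' : HasDerivAt (fun x : ℝ => ρ ^ 2 * sin x * cos x * sin ψ)
        ((ρ ^ 2 * cos θ * cos θ + ρ ^ 2 * sin θ * -sin θ) * sin ψ) θ := h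
    rw [h'.deriv, Real.cos_two_mul]
    linear_combination (-(ρ ^ 2 * sin ψ)) * Real.sin_sq_add_cos_sq θ
  have hr3 : deriv (fun x : ℝ => ρ ^ 2 * sin θ * cos θ * sin x) ψ
      = ρ ^ 2 * sin θ * cos θ * cos ψ := by
    have h := (hasDerivAt_sin ψ).const_mul (ρ ^ 2 * sin θ * cos θ)
    rw [h.deriv]
  -- derivatives of z
  have hz1 : deriv (fun x : ℝ =>
        C * x ^ k * cos θ ^ l * cos (2 * θ) ^ ((k - l) / 2) * cos ψ ^ l) ρ
      = C * (k * ρ ^ (k - 1)) * cos θ ^ l * cos (2 * θ) ^ ((k - l) / 2) * cos ψ ^ l := by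
    have h := ((((Real.hasDerivAt_rpow_const (p := k) (Or.inl hρ')).const_mul C).mul_const
      (cos θ ^ l)).mul_const (cos (2 * θ) ^ ((k - l) / 2))).mul_const (cos ψ ^ l)
    rw [h.deriv]
  have hz2 : deriv (fun x : ℝ =>
        C * ρ ^ k * cos x ^ l * cos (2 * x) ^ ((k - l) / 2) * cos ψ ^ l) θ
      = (C * ρ ^ k * (-sin θ * l * cos θ ^ (l - 1)) * cos (2 * θ) ^ ((k - l) / 2)
          + C * ρ ^ k * cos θ ^ l
            * (-sin (2 * θ) * 2 * ((k - l) / 2) * cos (2 * θ) ^ ((k - l) / 2 - 1)))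
        * cos ψ ^ l := by
    have hA : HasDerivAt (fun x : ℝ => C * ρ ^ k * cos x ^ l)
        (C * ρ ^ k * (-sin θ * l * cos θ ^ (l - 1))) θ :=
      ((hasDerivAt_cos θ).rpow_const (Or.inl hc.ne')).const_mul (C * ρ ^ k)
    have h2x : HasDerivAt (fun x : ℝ => 2 * x) 2 θ := by
      simpa using (hasDerivAt_id θ).const_mul 2
    have hB : HasDerivAt (fun x : ℝ => cos (2 * x) ^ ((k - l) / 2))
        (-sin (2 * θ) * 2 * ((k - l) / 2) * cos (2 * θ) ^ ((k - l) / 2 - 1)) θ := by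
      have := ((hasDerivAt_cos (2 * θ)).comp θ h2x).rpow_const (p := (k - l) / 2) (Or.inl hc2.ne')
      exact this
    have h := (hA.mul hB).mul_const (cos ψ ^ l)
    have h' : HasDerivAt (fun x : ℝ =>
          C * ρ ^ k * cos x ^ l * cos (2 * x) ^ ((k - l) / 2) * cos ψ ^ l)
        ((C * ρ ^ k * (-sin θ * l * cos θ ^ (l - 1)) * cos (2 * θ) ^ ((k - l) / 2)
          + C * ρ ^ k * cos θ ^ l
            * (-sin (2 * θ) * 2 * ((k - l) / 2) * cos (2 * θ) ^ ((k - l) / 2 - 1)))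
          * cos ψ ^ l) θ := h
    rw [h'.deriv]
  have hz3 : deriv (fun x : ℝ =>
        C * ρ ^ k * cos θ ^ l * cos (2 * θ) ^ ((k - l) / 2) * cos x ^ l) ψ
      = C * ρ ^ k * cos θ ^ l * cos (2 * θ) ^ ((k - l) / 2)
          * (-sin ψ * l * cos ψ ^ (l - 1)) := by
    have h := ((hasDerivAt_cos ψ).rpow_const (p := l) (Or.inl hcψ.ne')).const_mul
      (C * ρ ^ k * cos θ ^ l * cos (2 * θ) ^ ((k - l) / 2))
    rw [h.deriv]
  simp only [pairing, pd1, pd2, pd3]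
  rw [hr1, hr2, hr3, hz1, hz2, hz3,
    Real.rpow_sub_one hρ', Real.rpow_sub_one hc.ne', Real.rpow_sub_one hc2.ne',
    Real.rpow_sub_one hcψ.ne', Real.sin_two_mul, Real.cos_two_mul]
  have h2c : 2 * cos θ ^ 2 - 1 ≠ 0 := by
    rw [← Real.cos_two_mul]; exact hc2.ne'
  field_simp
  ring
end

section
/- Fix real numbers k₁, l₁, C₁, k₂, l₂, C₂ with k₁ + k₂ = 3, l₁ + l₂ = 1, k₁ l₂ − k₂ l₁ ≠ 0, and C₁ C₂ = ε/(k₁ l₂ − k₂ l₁) for some ε ∈ {1, −1}. Define on U' = {(ρ,θ,ψ) : ρ > 0, 0 < θ < π/4, 0 < ψ < π/2} the functions r = ρ² sin θ cos θ sin ψ and z^α = C_α ρ^{k_α} (cos θ)^{l_α} (cos 2θ)^{(k_α−l_α)/2} (cos ψ)^{l_α} for α = 1, 2. Then for all (ρ,θ,ψ) ∈ U', ⟨∇z¹,∇z¹⟩·⟨∇z²,∇z²⟩ − ⟨∇z¹,∇z²⟩² = ⟨∇r,∇r⟩, where ⟨∇u, ∇v⟩ = (∂_ρ u)(∂_ρ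 v) + ρ⁻²(∂_θ u)(∂_θ v) + ρ⁻² cos⁻²θ (∂_ψ u)(∂_ψ v). -/
open Real

lemma pd1_z (C k l ρ θ ψ : ℝ) (hρ : 0 < ρ) :
    pd1 (fun ρ θ ψ => C * ρ ^ k * (cos θ) ^ l * (cos (2 * θ)) ^ ((k - l) / 2) * (cos ψ) ^ l) ρ θ ψ
      = (k / ρ) * (C * ρ ^ k * (cos θ) ^ l * (cos (2 * θ)) ^ ((k - l) / 2) * (cos ψ) ^ l) := by
  have h0 : HasDerivAt (fun x : ℝ => x ^ k) (k * ρ ^ (k - 1)) ρ :=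
    Real.hasDerivAt_rpow_const (Or.inl hρ.ne')
  have h := (((h0.const_mul C).mul_const ((cos θ : ℝ) ^ l)).mul_const
      ((cos (2*θ) : ℝ) ^ ((k - l) / 2))).mul_const ((cos ψ : ℝ) ^ l)
  rw [pd1, h.deriv, Real.rpow_sub hρ, Real.rpow_one]
  ring

lemma pd2_z (C k l ρ θ ψ : ℝ) (hc : 0 < cos θ) (hd : 0 < cos (2 * θ)) :
    pd2 (fun ρ θ ψ => C * ρ ^ k * (cos θ) ^ l * (cos (2 * θ)) ^ ((k - l) / 2) * (cos ψ) ^ l) ρ θ ψ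
      = (-(l * sin θ / cos θ + (k - l) * sin (2 * θ) / cos (2 * θ)))
          * (C * ρ ^ k * (cos θ) ^ l * (cos (2 * θ)) ^ ((k - l) / 2) * (cos ψ) ^ l) := by
  have h1 : HasDerivAt (fun x : ℝ => (cos x) ^ l) (-sin θ * l * (cos θ) ^ (l - 1)) θ :=
    (Real.hasDerivAt_cos θ).rpow_const (Or.inl hc.ne')
  have h1' := h1.const_mul (C * ρ ^ k)
  have h2x : HasDerivAt (fun x : ℝ => cos (2 * x)) (-sin (2 * θ) * (2 * 1)) θ :=
    (Real.hasDerivAt_cos (2 * θ)).comp θ ((hasDerivAt_id θ).const_mul 2)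
  have h2 : HasDerivAt (fun x : ℝ => (cos (2 * x)) ^ ((k - l) / 2))
      (-sin (2 * θ) * (2 * 1) * ((k - l) / 2) * (cos (2 * θ)) ^ ((k - l) / 2 - 1)) θ :=
    h2x.rpow_const (Or.inl hd.ne')
  have h := (h1'.mul h2).mul_const ((cos ψ : ℝ) ^ l)
  simp only [Pi.mul_apply] at h
  rw [pd2, h.deriv, Real.rpow_sub hc, Real.rpow_sub hd, Real.rpow_one, Real.rpow_one]
  ring

lemma pd3_z (C k l ρ θ ψ : ℝ) (he : 0 < cos ψ) :
    pd3 (fun ρ θ ψ => C * ρ ^ k * (cos θ) ^ l * (cos (2 * θ)) ^ ((k - l) / 2) * (cos ψ) ^ l) ρ θ ψ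
      = (-(l * sin ψ / cos ψ))
          * (C * ρ ^ k * (cos θ) ^ l * (cos (2 * θ)) ^ ((k - l) / 2) * (cos ψ) ^ l) := by
  have h0 : HasDerivAt (fun x : ℝ => (cos x) ^ l) (-sin ψ * l * (cos ψ) ^ (l - 1)) ψ :=
    (Real.hasDerivAt_cos ψ).rpow_const (Or.inl he.ne')
  have h := h0.const_mul (C * ρ ^ k * (cos θ) ^ l * (cos (2 * θ)) ^ ((k - l) / 2))
  rw [pd3, h.deriv, Real.rpow_sub he, Real.rpow_one]
  ring

lemma pd1_r (ρ θ ψ : ℝ) :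
    pd1 (fun ρ θ ψ => ρ ^ 2 * sin θ * cos θ * sin ψ) ρ θ ψ
      = 2 * ρ * sin θ * cos θ * sin ψ := by
  have h := (((hasDerivAt_pow 2 ρ).mul_const (sin θ)).mul_const (cos θ)).mul_const (sin ψ)
  rw [pd1, h.deriv]
  push_cast
  ring

lemma pd2_r (ρ θ ψ : ℝ) :
    pd2 (fun ρ θ ψ => ρ ^ 2 * sin θ * cos θ * sin ψ) ρ θ ψ
      = ρ ^ 2 * cos (2 * θ) * sin ψ := by
  have h := (((Real.hasDerivAt_sin θ).const_mul (ρ ^ 2)).mul (Real.hasDerivAt_cos θ)).mul_const (sin ψ)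
  simp only [Pi.mul_apply] at h
  rw [pd2, h.deriv, Real.cos_two_mul']
  ring

lemma pd3_r (ρ θ ψ : ℝ) :
    pd3 (fun ρ θ ψ => ρ ^ 2 * sin θ * cos θ * sin ψ) ρ θ ψ
      = ρ ^ 2 * sin θ * cos θ * cos ψ := by
  have h := (Real.hasDerivAt_sin ψ).const_mul (ρ ^ 2 * sin θ * cos θ)
  rw [pd3, h.deriv]

/-- The ansatz coordinates `z^α = C_α ρ^{k_α}(cos θ)^{l_α}(cos 2θ)^{(k_α−l_α)/2}(cos ψ)^{l_α}`
give `λ = 1` (the Gram determinant identity) provided `k₁ + k₂ = 3`, `l₁ + l₂ = 1` and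
`C₁C₂ = ±1/(k₁l₂ − k₂l₁)`, where `r = ρ² sin θ cos θ sin ψ`. -/
theorem stmt_5 (k₁ l₁ C₁ k₂ l₂ C₂ ε : ℝ)
    (hk : k₁ + k₂ = 3) (hl : l₁ + l₂ = 1) (hkl : k₁ * l₂ - k₂ * l₁ ≠ 0)
    (hε : ε = 1 ∨ ε = -1) (hC : C₁ * C₂ = ε / (k₁ * l₂ - k₂ * l₁))
    (ρ θ ψ : ℝ) (hρ : 0 < ρ) (hθ0 : 0 < θ) (hθ1 : θ < π / 4)
    (hψ0 : 0 < ψ) (hψ1 : ψ < π / 2) :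
    pairing
        (fun ρ θ ψ => C₁ * ρ ^ k₁ * (cos θ) ^ l₁ * (cos (2 * θ)) ^ ((k₁ - l₁) / 2) * (cos ψ) ^ l₁)
        (fun ρ θ ψ => C₁ * ρ ^ k₁ * (cos θ) ^ l₁ * (cos (2 * θ)) ^ ((k₁ - l₁) / 2) * (cos ψ) ^ l₁)
        ρ θ ψ *
      pairing
        (fun ρ θ ψ => C₂ * ρ ^ k₂ * (cos θ) ^ l₂ * (cos (2 * θ)) ^ ((k₂ - l₂) / 2) * (cos ψ) ^ l₂)
        (fun ρ θ ψ => C₂ * ρ ^ k₂ * (cos θ) ^ l₂ * (cos (2 * θ)) ^ ((k₂ - l₂) / 2) * (cos ψ) ^ l₂)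
        ρ θ ψ -
      (pairing
        (fun ρ θ ψ => C₁ * ρ ^ k₁ * (cos θ) ^ l₁ * (cos (2 * θ)) ^ ((k₁ - l₁) / 2) * (cos ψ) ^ l₁)
        (fun ρ θ ψ => C₂ * ρ ^ k₂ * (cos θ) ^ l₂ * (cos (2 * θ)) ^ ((k₂ - l₂) / 2) * (cos ψ) ^ l₂)
        ρ θ ψ) ^ 2
      = pairing (fun ρ θ ψ => ρ ^ 2 * sin θ * cos θ * sin ψ)
          (fun ρ θ ψ => ρ ^ 2 * sin θ * cos θ * sin ψ) ρ θ ψ := by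
  have hπ := pi_pos
  have hc : 0 < cos θ := Real.cos_pos_of_mem_Ioo ⟨by linarith, by linarith⟩
  have hd : 0 < cos (2 * θ) := Real.cos_pos_of_mem_Ioo ⟨by linarith, by linarith⟩
  have he : 0 < cos ψ := Real.cos_pos_of_mem_Ioo ⟨by linarith, by linarith⟩
  have hε2 : ε ^ 2 = 1 := by rcases hε with rfl | rfl <;> norm_num
  have hm : (k₁ - l₁) / 2 + (k₂ - l₂) / 2 = 1 := by linarith
  -- product of the two coordinates
  have hZ : (C₁ * ρ ^ k₁ * (cos θ) ^ l₁ * (cos (2 * θ)) ^ ((k₁ - l₁) / 2) * (cos ψ) ^ l₁)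
        * (C₂ * ρ ^ k₂ * (cos θ) ^ l₂ * (cos (2 * θ)) ^ ((k₂ - l₂) / 2) * (cos ψ) ^ l₂)
      = ε / (k₁ * l₂ - k₂ * l₁) * (ρ ^ (3 : ℕ) * cos θ * cos (2 * θ) * cos ψ) := by
    have e1 : ρ ^ k₁ * ρ ^ k₂ = ρ ^ (3 : ℕ) := by
      rw [← Real.rpow_natCast ρ 3, ← Real.rpow_add hρ]; norm_num [hk]
    have e2 : cos θ ^ l₁ * cos θ ^ l₂ = cos θ := by
      rw [← Real.rpow_add hc, hl, Real.rpow_one]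
    have e3 : cos (2 * θ) ^ ((k₁ - l₁) / 2) * cos (2 * θ) ^ ((k₂ - l₂) / 2) = cos (2 * θ) := by
      rw [← Real.rpow_add hd, hm, Real.rpow_one]
    have e4 : cos ψ ^ l₁ * cos ψ ^ l₂ = cos ψ := by
      rw [← Real.rpow_add he, hl, Real.rpow_one]
    calc (C₁ * ρ ^ k₁ * (cos θ) ^ l₁ * (cos (2 * θ)) ^ ((k₁ - l₁) / 2) * (cos ψ) ^ l₁)
          * (C₂ * ρ ^ k₂ * (cos θ) ^ l₂ * (cos (2 * θ)) ^ ((k₂ - l₂) / 2) * (cos ψ) ^ l₂)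
        = (C₁ * C₂) * ((ρ ^ k₁ * ρ ^ k₂) * ((cos θ ^ l₁ * cos θ ^ l₂)
            * ((cos (2 * θ) ^ ((k₁ - l₁) / 2) * cos (2 * θ) ^ ((k₂ - l₂) / 2))
              * (cos ψ ^ l₁ * cos ψ ^ l₂)))) := by ring
      _ = ε / (k₁ * l₂ - k₂ * l₁) * (ρ ^ (3 : ℕ) * cos θ * cos (2 * θ) * cos ψ) := by
          rw [e1, e2, e3, e4, hC]; ring
  simp only [pairing]
  rw [pd1_z C₁ k₁ l₁ ρ θ ψ hρ, pd2_z C₁ k₁ l₁ ρ θ ψ hc hd, pd3_z C₁ k₁ l₁ ρ θ ψ he,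
      pd1_z C₂ k₂ l₂ ρ θ ψ hρ, pd2_z C₂ k₂ l₂ ρ θ ψ hc hd, pd3_z C₂ k₂ l₂ ρ θ ψ he,
      pd1_r, pd2_r, pd3_r]
  set Z₁ := C₁ * ρ ^ k₁ * (cos θ) ^ l₁ * (cos (2 * θ)) ^ ((k₁ - l₁) / 2) * (cos ψ) ^ l₁ with hZ₁
  set Z₂ := C₂ * ρ ^ k₂ * (cos θ) ^ l₂ * (cos (2 * θ)) ^ ((k₂ - l₂) / 2) * (cos ψ) ^ l₂ with hZ₂
  have hZsq : (Z₁ * Z₂) ^ 2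
      = (ρ ^ (3 : ℕ) * cos θ * cos (2 * θ) * cos ψ) ^ 2 / (k₁ * l₂ - k₂ * l₁) ^ 2 := by
    rw [hZ]
    field_simp
    linear_combination hε2
  have h4 : sin θ / cos θ - sin (2 * θ) / cos (2 * θ)
      = -(sin θ / (cos θ * cos (2 * θ))) := by
    have hd' : (2 * cos θ ^ 2 - 1) ≠ 0 := by rw [Real.cos_two_mul] at hd; exact hd.ne'
    rw [Real.sin_two_mul, Real.cos_two_mul]
    field_simp
    have hd'' : (-1 + cos θ ^ 2 * 2) ≠ 0 := by contrapose! hd'; linarith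
    have hu := mul_inv_cancel₀ hd''
    linear_combination (-sin θ) * hu
  have lag : (k₁ / ρ * Z₁ * (k₁ / ρ * Z₁)
        + (ρ ^ 2)⁻¹ * (-(l₁ * sin θ / cos θ + (k₁ - l₁) * sin (2 * θ) / cos (2 * θ)) * Z₁
            * (-(l₁ * sin θ / cos θ + (k₁ - l₁) * sin (2 * θ) / cos (2 * θ)) * Z₁))
        + (ρ ^ 2)⁻¹ * ((cos θ) ^ 2)⁻¹ * (-(l₁ * sin ψ / cos ψ) * Z₁ * (-(l₁ * sin ψ / cos ψ) * Z₁)))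
      * (k₂ / ρ * Z₂ * (k₂ / ρ * Z₂)
        + (ρ ^ 2)⁻¹ * (-(l₂ * sin θ / cos θ + (k₂ - l₂) * sin (2 * θ) / cos (2 * θ)) * Z₂
            * (-(l₂ * sin θ / cos θ + (k₂ - l₂) * sin (2 * θ) / cos (2 * θ)) * Z₂))
        + (ρ ^ 2)⁻¹ * ((cos θ) ^ 2)⁻¹ * (-(l₂ * sin ψ / cos ψ) * Z₂ * (-(l₂ * sin ψ / cos ψ) * Z₂)))
      - (k₁ / ρ * Z₁ * (k₂ / ρ * Z₂)
        + (ρ ^ 2)⁻¹ * (-(l₁ * sin θ / cos θ + (k₁ - l₁) * sin (2 * θ) / cos (2 * θ)) * Z₁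
            * (-(l₂ * sin θ / cos θ + (k₂ - l₂) * sin (2 * θ) / cos (2 * θ)) * Z₂))
        + (ρ ^ 2)⁻¹ * ((cos θ) ^ 2)⁻¹ * (-(l₁ * sin ψ / cos ψ) * Z₁ * (-(l₂ * sin ψ / cos ψ) * Z₂))) ^ 2
      = (Z₁ * Z₂) ^ 2 * ((k₁ * l₂ - k₂ * l₁) ^ 2 *
          (((ρ ^ 2)⁻¹ * (sin θ / cos θ - sin (2 * θ) / cos (2 * θ))) ^ 2
            + ((ρ ^ 2)⁻¹ * (cos θ)⁻¹ * (sin ψ / cos ψ)) ^ 2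
            + ((ρ ^ 2)⁻¹ * (cos θ)⁻¹ * (sin ψ / cos ψ) * (sin (2 * θ) / cos (2 * θ))) ^ 2)) := by
    ring
  rw [lag, hZsq, h4, Real.sin_two_mul]
  field_simp
  ring
end

section
/- Let ρ₀ > 0 and put f(ρ) = 1 − ρ₀³/ρ³, and let r(ρ,θ,ψ) = ρ² √(f(ρ)) sin θ cos θ sin ψ on the region V = {(ρ,θ,ψ) : ρ > ρ₀, 0 < θ < π/2, 0 < ψ < π}. Let b₁, b₂ : (ρ₀,∞) → ℝ be differentiable and nowhere zero, and set z¹ = b₁(ρ) cos θ cos ψ, z² = b₂(ρ)(cos²θ − sin²θ). Then the orthogonality conditions ⟨∇r, ∇z¹⟩ = 0 and ⟨∇r, ∇z²⟩ = 0 hold at every point of V, where ⟨∇u,∇v⟩ = f(ρ)(∂_ρ u)(∂_ρ v) + ρ⁻²(∂_θ u)(∂_θ v) + ρ⁻² cos⁻²θ (∂_ψ u)(∂_ψ v), if and only if 2 b₁′(ρ)/b₁(ρ) = b₂′(ρ)/b₂(ρ) = 8ρ³/(4ρ⁴ − ρ ρ₀³) for all ρ > ρ₀. -/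
open Real

/-- Inner product of gradients with respect to the orbit-space metric
`g̃ = f⁻¹ dρ² + ρ² dθ² + ρ² cos²θ dψ²`:
`⟨∇u,∇v⟩ = f(ρ)(∂_ρ u)(∂_ρ v) + ρ⁻²(∂_θ u)(∂_θ v) + ρ⁻² cos⁻²θ (∂_ψ u)(∂_ψ v)`. -/
noncomputable def pairingF (f : ℝ → ℝ) (u v : ℝ → ℝ → ℝ → ℝ) (ρ θ ψ : ℝ) : ℝ :=
  f ρ * (pd1 u ρ θ ψ * pd1 v ρ θ ψ)
    + (ρ ^ 2)⁻¹ * (pd2 u ρ θ ψ * pd2 v ρ θ ψ)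
    + (ρ ^ 2)⁻¹ * ((cos θ) ^ 2)⁻¹ * (pd3 u ρ θ ψ * pd3 v ρ θ ψ)

lemma aux_pairings (ρ₀ : ℝ) (hρ₀ : 0 < ρ₀) (b₁ b₂ : ℝ → ℝ) (ρ θ ψ : ℝ)
    (hρ : ρ₀ < ρ) (hb₁ : DifferentiableAt ℝ b₁ ρ) (hb₂ : DifferentiableAt ℝ b₂ ρ)
    (hcθ : cos θ ≠ 0) :
    pairingF (fun ρ => 1 - ρ₀ ^ 3 / ρ ^ 3)
        (fun ρ θ ψ => ρ ^ 2 * Real.sqrt (1 - ρ₀ ^ 3 / ρ ^ 3) * sin θ * cos θ * sin ψ)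
        (fun ρ θ ψ => b₁ ρ * cos θ * cos ψ) ρ θ ψ
      = Real.sqrt (1 - ρ₀ ^ 3 / ρ ^ 3) * (sin θ * cos θ ^ 2 * sin ψ * cos ψ)
          * (deriv b₁ ρ * ((4 * ρ ^ 3 - ρ₀ ^ 3) / (2 * ρ ^ 2)) - 2 * b₁ ρ)
    ∧ pairingF (fun ρ => 1 - ρ₀ ^ 3 / ρ ^ 3)
        (fun ρ θ ψ => ρ ^ 2 * Real.sqrt (1 - ρ₀ ^ 3 / ρ ^ 3) * sin θ * cos θ * sin ψ)
        (fun ρ θ _ => b₂ ρ * ((cos θ) ^ 2 - (sin θ) ^ 2)) ρ θ ψ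
      = Real.sqrt (1 - ρ₀ ^ 3 / ρ ^ 3) * (sin θ * cos θ * sin ψ * ((cos θ) ^ 2 - (sin θ) ^ 2))
          * (deriv b₂ ρ * ((4 * ρ ^ 3 - ρ₀ ^ 3) / (2 * ρ ^ 2)) - 4 * b₂ ρ) := by
  have hρpos : 0 < ρ := hρ₀.trans hρ
  have hρne : ρ ≠ 0 := hρpos.ne'
  have h3 : ρ₀ ^ 3 < ρ ^ 3 := by
    nlinarith [mul_pos (sub_pos.mpr hρ) (by positivity : (0:ℝ) < ρ ^ 2 + ρ * ρ₀ + ρ₀ ^ 2)]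
  have hf : 0 < 1 - ρ₀ ^ 3 / ρ ^ 3 := by
    have : ρ₀ ^ 3 / ρ ^ 3 < 1 := (div_lt_one (by positivity)).mpr h3
    linarith
  set S := Real.sqrt (1 - ρ₀ ^ 3 / ρ ^ 3) with hSdef
  have hS : 0 < S := Real.sqrt_pos.mpr hf
  have hS2 : S ^ 2 = 1 - ρ₀ ^ 3 / ρ ^ 3 := Real.sq_sqrt hf.le
  have hS2' : S ^ 2 * ρ ^ 3 = ρ ^ 3 - ρ₀ ^ 3 := by
    rw [hS2]; field_simp
  have hx3 : HasDerivAt (fun x : ℝ => x ^ 3) (3 * ρ ^ 2) ρ := by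
    simpa using hasDerivAt_pow 3 ρ
  have hg : HasDerivAt (fun x : ℝ => 1 - ρ₀ ^ 3 / x ^ 3) (3 * ρ₀ ^ 3 / ρ ^ 4) ρ := by
    have hinv := hx3.inv (by positivity : ρ ^ 3 ≠ 0)
    have h2 := (hinv.const_mul (ρ₀ ^ 3)).const_sub 1
    have heq : (fun x : ℝ => 1 - ρ₀ ^ 3 * (x ^ 3)⁻¹) = fun x : ℝ => 1 - ρ₀ ^ 3 / x ^ 3 := by
      funext x; rw [div_eq_mul_inv]
    simp only [Pi.inv_apply] at h2
    rw [heq] at h2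
    refine h2.congr_deriv ?_; symm
    field_simp
  have hSd : HasDerivAt (fun x : ℝ => Real.sqrt (1 - ρ₀ ^ 3 / x ^ 3))
      (3 * ρ₀ ^ 3 / ρ ^ 4 / (2 * S)) ρ := hg.sqrt hf.ne'
  have hA : HasDerivAt (fun x : ℝ => x ^ 2 * Real.sqrt (1 - ρ₀ ^ 3 / x ^ 3))
      ((4 * ρ ^ 3 - ρ₀ ^ 3) / (2 * ρ ^ 2 * S)) ρ := by
    have h := (hasDerivAt_pow 2 ρ).mul hSd
    simp only [Pi.mul_def] at h
    refine h.congr_deriv ?_; symm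
    rw [← hSdef]
    field_simp
    linear_combination (-4) * hS2'
  set A' := (4 * ρ ^ 3 - ρ₀ ^ 3) / (2 * ρ ^ 2 * S) with hA'def
  have e1 : pd1 (fun ρ θ ψ => ρ ^ 2 * Real.sqrt (1 - ρ₀ ^ 3 / ρ ^ 3) * sin θ * cos θ * sin ψ) ρ θ ψ
      = A' * sin θ * cos θ * sin ψ := by
    rw [pd1]
    exact (((hA.mul_const (sin θ)).mul_const (cos θ)).mul_const (sin ψ)).deriv
  have e2 : pd2 (fun ρ θ ψ => ρ ^ 2 * Real.sqrt (1 - ρ₀ ^ 3 / ρ ^ 3) * sin θ * cos θ * sin ψ) ρ θ ψ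
      = (ρ ^ 2 * S * cos θ * cos θ + ρ ^ 2 * S * sin θ * (-sin θ)) * sin ψ := by
    rw [pd2]
    have h := (((Real.hasDerivAt_sin θ).const_mul (ρ ^ 2 * S)).mul (Real.hasDerivAt_cos θ)).mul_const (sin ψ)
    simp only [Pi.mul_apply] at h
    convert h.deriv using 1 <;> ring
  have e3 : pd3 (fun ρ θ ψ => ρ ^ 2 * Real.sqrt (1 - ρ₀ ^ 3 / ρ ^ 3) * sin θ * cos θ * sin ψ) ρ θ ψ
      = ρ ^ 2 * S * sin θ * cos θ * cos ψ := by
    rw [pd3]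
    have h := (Real.hasDerivAt_sin ψ).const_mul (ρ ^ 2 * S * sin θ * cos θ)
    convert h.deriv using 1 <;> ring
  have f1 : pd1 (fun ρ θ ψ => b₁ ρ * cos θ * cos ψ) ρ θ ψ = deriv b₁ ρ * cos θ * cos ψ := by
    rw [pd1]
    exact ((hb₁.hasDerivAt.mul_const (cos θ)).mul_const (cos ψ)).deriv
  have f2 : pd2 (fun ρ θ ψ => b₁ ρ * cos θ * cos ψ) ρ θ ψ = b₁ ρ * (-sin θ) * cos ψ := by
    rw [pd2]
    have h := ((Real.hasDerivAt_cos θ).const_mul (b₁ ρ)).mul_const (cos ψ)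
    convert h.deriv using 1 <;> ring
  have f3 : pd3 (fun ρ θ ψ => b₁ ρ * cos θ * cos ψ) ρ θ ψ = b₁ ρ * cos θ * (-sin ψ) := by
    rw [pd3]
    have h := (Real.hasDerivAt_cos ψ).const_mul (b₁ ρ * cos θ)
    convert h.deriv using 1 <;> ring
  have g1 : pd1 (fun ρ θ _ => b₂ ρ * ((cos θ) ^ 2 - (sin θ) ^ 2)) ρ θ ψ
      = deriv b₂ ρ * ((cos θ) ^ 2 - (sin θ) ^ 2) := by
    rw [pd1]
    exact (hb₂.hasDerivAt.mul_const _).deriv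
  have g2 : pd2 (fun ρ θ _ => b₂ ρ * ((cos θ) ^ 2 - (sin θ) ^ 2)) ρ θ ψ
      = b₂ ρ * (-(4 * sin θ * cos θ)) := by
    rw [pd2]
    have h := (((Real.hasDerivAt_cos θ).pow 2).sub ((Real.hasDerivAt_sin θ).pow 2)).const_mul (b₂ ρ)
    simp only [Pi.sub_apply, Pi.pow_apply] at h
    convert h.deriv using 1 <;> ring
  have g3 : pd3 (fun ρ θ _ => b₂ ρ * ((cos θ) ^ 2 - (sin θ) ^ 2)) ρ θ ψ = 0 := by
    rw [pd3]; exact deriv_const _ _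
  constructor
  · simp only [pairingF, e1, e2, e3, f1, f2, f3]
    rw [← hS2, hA'def]
    have hsc : sin θ ^ 2 + cos θ ^ 2 = 1 := sin_sq_add_cos_sq θ
    field_simp
    linear_combination (2 * ρ ^ 2 * sin θ * sin ψ * cos ψ * b₁ ρ) * hsc
  · simp only [pairingF, e1, e2, e3, g1, g2, g3]
    rw [← hS2, hA'def]
    field_simp
    ring

/-- For the six-dimensional Schwarzschild–Tangherlini black hole, the ansatz
`z¹ = b₁(ρ) cos θ cos ψ`, `z² = b₂(ρ) cos 2θ` satisfies the orthogonality conditions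
`⟨∇r, ∇z^α⟩ = 0` on all of `V` if and only if
`2 b₁′/b₁ = b₂′/b₂ = 8ρ³/(4ρ⁴ − ρρ₀³)` on `(ρ₀, ∞)`. -/
theorem stmt_7 (ρ₀ : ℝ) (hρ₀ : 0 < ρ₀) (b₁ b₂ : ℝ → ℝ)
    (hb₁d : ∀ ρ, ρ₀ < ρ → DifferentiableAt ℝ b₁ ρ)
    (hb₂d : ∀ ρ, ρ₀ < ρ → DifferentiableAt ℝ b₂ ρ)
    (hb₁0 : ∀ ρ, ρ₀ < ρ → b₁ ρ ≠ 0)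
    (hb₂0 : ∀ ρ, ρ₀ < ρ → b₂ ρ ≠ 0) :
    (∀ ρ θ ψ : ℝ, ρ₀ < ρ → 0 < θ → θ < π / 2 → 0 < ψ → ψ < π →
      pairingF (fun ρ => 1 - ρ₀ ^ 3 / ρ ^ 3)
          (fun ρ θ ψ => ρ ^ 2 * Real.sqrt (1 - ρ₀ ^ 3 / ρ ^ 3) * sin θ * cos θ * sin ψ)
          (fun ρ θ ψ => b₁ ρ * cos θ * cos ψ) ρ θ ψ = 0 ∧
      pairingF (fun ρ => 1 - ρ₀ ^ 3 / ρ ^ 3)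
          (fun ρ θ ψ => ρ ^ 2 * Real.sqrt (1 - ρ₀ ^ 3 / ρ ^ 3) * sin θ * cos θ * sin ψ)
          (fun ρ θ _ => b₂ ρ * ((cos θ) ^ 2 - (sin θ) ^ 2)) ρ θ ψ = 0)
    ↔ (∀ ρ, ρ₀ < ρ →
        2 * deriv b₁ ρ / b₁ ρ = 8 * ρ ^ 3 / (4 * ρ ^ 4 - ρ * ρ₀ ^ 3) ∧
        deriv b₂ ρ / b₂ ρ = 8 * ρ ^ 3 / (4 * ρ ^ 4 - ρ * ρ₀ ^ 3)) := by
  have pi_pos := Real.pi_pos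
  constructor
  · intro h ρ hρ
    have hρpos : 0 < ρ := hρ₀.trans hρ
    have hρne : ρ ≠ 0 := hρpos.ne'
    have h3 : ρ₀ ^ 3 < ρ ^ 3 := by
      nlinarith [mul_pos (sub_pos.mpr hρ) (by positivity : (0:ℝ) < ρ ^ 2 + ρ * ρ₀ + ρ₀ ^ 2)]
    have hf : 0 < 1 - ρ₀ ^ 3 / ρ ^ 3 := by
      have : ρ₀ ^ 3 / ρ ^ 3 < 1 := (div_lt_one (by positivity)).mpr h3
      linarith
    have hnum : 0 < 4 * ρ ^ 3 - ρ₀ ^ 3 := by nlinarith [pow_pos hρpos 3]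
    have hden : 0 < 4 * ρ ^ 4 - ρ * ρ₀ ^ 3 := by nlinarith [mul_pos hρpos hnum]
    have hc : cos (π / 6) ≠ 0 := by
      rw [Real.cos_pi_div_six]; positivity
    obtain ⟨h1, h2⟩ := h ρ (π / 6) (π / 3) hρ (by positivity) (by linarith) (by positivity)
      (by linarith)
    obtain ⟨E1, E2⟩ := aux_pairings ρ₀ hρ₀ b₁ b₂ ρ (π / 6) (π / 3) hρ (hb₁d ρ hρ) (hb₂d ρ hρ) hc
    rw [E1, Real.sin_pi_div_six, Real.cos_pi_div_six, Real.sin_pi_div_three,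
      Real.cos_pi_div_three] at h1
    rw [E2, Real.sin_pi_div_six, Real.cos_pi_div_six, Real.sin_pi_div_three] at h2
    have h3pos : (0:ℝ) < Real.sqrt 3 := Real.sqrt_pos.mpr (by norm_num)
    have hSpos : (0:ℝ) < Real.sqrt (1 - ρ₀ ^ 3 / ρ ^ 3) := Real.sqrt_pos.mpr hf
    have hpre1 : (0:ℝ) < Real.sqrt (1 - ρ₀ ^ 3 / ρ ^ 3)
        * (1 / 2 * (Real.sqrt 3 / 2) ^ 2 * (Real.sqrt 3 / 2) * (1 / 2)) := by positivity
    have hpre2 : (0:ℝ) < Real.sqrt (1 - ρ₀ ^ 3 / ρ ^ 3)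
        * (1 / 2 * (Real.sqrt 3 / 2) * (Real.sqrt 3 / 2) * ((Real.sqrt 3 / 2) ^ 2 - (1 / 2) ^ 2)) := by
      have : (Real.sqrt 3) ^ 2 = 3 := Real.sq_sqrt (by norm_num)
      have h' : (Real.sqrt 3 / 2) ^ 2 - (1 / 2 : ℝ) ^ 2 = 1 / 2 := by
        rw [div_pow, this]; norm_num
      rw [h']
      positivity
    have hX1 : deriv b₁ ρ * ((4 * ρ ^ 3 - ρ₀ ^ 3) / (2 * ρ ^ 2)) - 2 * b₁ ρ = 0 := by
      rcases mul_eq_zero.mp h1 with h' | h'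
      · exact absurd h' hpre1.ne'
      · exact h'
    have hX2 : deriv b₂ ρ * ((4 * ρ ^ 3 - ρ₀ ^ 3) / (2 * ρ ^ 2)) - 4 * b₂ ρ = 0 := by
      rcases mul_eq_zero.mp h2 with h' | h'
      · exact absurd h' hpre2.ne'
      · exact h'
    have hX1' : deriv b₁ ρ * (4 * ρ ^ 3 - ρ₀ ^ 3) = 4 * ρ ^ 2 * b₁ ρ := by
      have := sub_eq_zero.mp hX1
      field_simp at this
      linarith
    have hX2' : deriv b₂ ρ * (4 * ρ ^ 3 - ρ₀ ^ 3) = 8 * ρ ^ 2 * b₂ ρ := by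
      have := sub_eq_zero.mp hX2
      field_simp at this
      linarith
    constructor
    · rw [div_eq_div_iff (hb₁0 ρ hρ) hden.ne']
      linear_combination 2 * ρ * hX1'
    · rw [div_eq_div_iff (hb₂0 ρ hρ) hden.ne']
      linear_combination ρ * hX2'
  · intro h ρ θ ψ hρ hθ1 hθ2 hψ1 hψ2
    have hρpos : 0 < ρ := hρ₀.trans hρ
    have hρne : ρ ≠ 0 := hρpos.ne'
    have h3 : ρ₀ ^ 3 < ρ ^ 3 := by
      nlinarith [mul_pos (sub_pos.mpr hρ) (by positivity : (0:ℝ) < ρ ^ 2 + ρ * ρ₀ + ρ₀ ^ 2)]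
    have hnum : 0 < 4 * ρ ^ 3 - ρ₀ ^ 3 := by nlinarith [pow_pos hρpos 3]
    have hden : 0 < 4 * ρ ^ 4 - ρ * ρ₀ ^ 3 := by nlinarith [mul_pos hρpos hnum]
    have hc : cos θ ≠ 0 := (Real.cos_pos_of_mem_Ioo ⟨by linarith, hθ2⟩).ne'
    obtain ⟨E1, E2⟩ := aux_pairings ρ₀ hρ₀ b₁ b₂ ρ θ ψ hρ (hb₁d ρ hρ) (hb₂d ρ hρ) hc
    obtain ⟨h1, h2⟩ := h ρ hρ
    rw [div_eq_div_iff (hb₁0 ρ hρ) hden.ne'] at h1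
    rw [div_eq_div_iff (hb₂0 ρ hρ) hden.ne'] at h2
    have h1' : deriv b₁ ρ * (4 * ρ ^ 3 - ρ₀ ^ 3) = 4 * ρ ^ 2 * b₁ ρ :=
      mul_left_cancel₀ (show (2 * ρ : ℝ) ≠ 0 by positivity) (by linear_combination h1)
    have h2' : deriv b₂ ρ * (4 * ρ ^ 3 - ρ₀ ^ 3) = 8 * ρ ^ 2 * b₂ ρ :=
      mul_left_cancel₀ hρne (by linear_combination h2)
    have hX1 : deriv b₁ ρ * ((4 * ρ ^ 3 - ρ₀ ^ 3) / (2 * ρ ^ 2)) - 2 * b₁ ρ = 0 := by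
      rw [sub_eq_zero]
      field_simp
      linear_combination h1'
    have hX2 : deriv b₂ ρ * ((4 * ρ ^ 3 - ρ₀ ^ 3) / (2 * ρ ^ 2)) - 4 * b₂ ρ = 0 := by
      rw [sub_eq_zero]
      field_simp
      linear_combination h2'
    exact ⟨by rw [E1, hX1, mul_zero], by rw [E2, hX2, mul_zero]⟩
end

section
/- Let ρ₀ > 0, f(ρ) = 1 − ρ₀³/ρ³, and define on V = {(ρ,θ,ψ) : ρ > ρ₀, 0 < θ < π/2, 0 < ψ < π} the functions r = ρ² √(f(ρ)) sin θ cos θ sin ψ, z¹ = ρ (1 − ρ₀³/(4ρ³))^{1/3} cos θ cos ψ, and z² = ½ ρ² (1 − ρ₀³/(4ρ³))^{2/3} (cos²θ − sin²θ). With the pairing ⟨∇u,∇v⟩ = f(ρ)(∂_ρ u)(∂_ρ v) + ρ⁻²(∂_θ u)(∂_θ v) + ρ⁻² cos⁻²θ (∂_ψ u)(∂_ψ v), one has at every point of V the identity ⟨∇z¹,∇z¹⟩·⟨∇z²,∇z²⟩ − ⟨∇z¹,∇z²⟩² = ⟨∇r,∇r⟩. -/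
open Real

set_option maxHeartbeats 4000000

/-- The Gram determinant identity (`λ = 1`) for the canonical coordinates of the
six-dimensional Schwarzschild–Tangherlini black hole. -/
theorem stmt_8 (ρ₀ : ℝ) (hρ₀ : 0 < ρ₀) (ρ θ ψ : ℝ) (hρ : ρ₀ < ρ)
    (hθ0 : 0 < θ) (hθ1 : θ < π / 2) (hψ0 : 0 < ψ) (hψ1 : ψ < π) :
    pairingF (fun ρ => 1 - ρ₀ ^ 3 / ρ ^ 3)
        (fun ρ θ ψ => ρ * (1 - ρ₀ ^ 3 / (4 * ρ ^ 3)) ^ ((1 : ℝ) / 3) * cos θ * cos ψ)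
        (fun ρ θ ψ => ρ * (1 - ρ₀ ^ 3 / (4 * ρ ^ 3)) ^ ((1 : ℝ) / 3) * cos θ * cos ψ) ρ θ ψ *
      pairingF (fun ρ => 1 - ρ₀ ^ 3 / ρ ^ 3)
        (fun ρ θ _ => (1 / 2) * ρ ^ 2 * (1 - ρ₀ ^ 3 / (4 * ρ ^ 3)) ^ ((2 : ℝ) / 3) *
          ((cos θ) ^ 2 - (sin θ) ^ 2))
        (fun ρ θ _ => (1 / 2) * ρ ^ 2 * (1 - ρ₀ ^ 3 / (4 * ρ ^ 3)) ^ ((2 : ℝ) / 3) *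
          ((cos θ) ^ 2 - (sin θ) ^ 2)) ρ θ ψ -
      (pairingF (fun ρ => 1 - ρ₀ ^ 3 / ρ ^ 3)
        (fun ρ θ ψ => ρ * (1 - ρ₀ ^ 3 / (4 * ρ ^ 3)) ^ ((1 : ℝ) / 3) * cos θ * cos ψ)
        (fun ρ θ _ => (1 / 2) * ρ ^ 2 * (1 - ρ₀ ^ 3 / (4 * ρ ^ 3)) ^ ((2 : ℝ) / 3) *
          ((cos θ) ^ 2 - (sin θ) ^ 2)) ρ θ ψ) ^ 2
      = pairingF (fun ρ => 1 - ρ₀ ^ 3 / ρ ^ 3)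
          (fun ρ θ ψ => ρ ^ 2 * Real.sqrt (1 - ρ₀ ^ 3 / ρ ^ 3) * sin θ * cos θ * sin ψ)
          (fun ρ θ ψ => ρ ^ 2 * Real.sqrt (1 - ρ₀ ^ 3 / ρ ^ 3) * sin θ * cos θ * sin ψ)
          ρ θ ψ := by
  have hρpos : 0 < ρ := lt_trans hρ₀ hρ
  have hρne : ρ ≠ 0 := hρpos.ne'
  have hcub : ρ₀ ^ 3 < ρ ^ 3 := pow_lt_pow_left₀ hρ hρ₀.le (by norm_num)
  have hρ3 : (0:ℝ) < ρ ^ 3 := by positivity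
  have hgpos : 0 < 1 - ρ₀ ^ 3 / (4 * ρ ^ 3) := by
    have h : ρ₀ ^ 3 / (4 * ρ ^ 3) < 1 := by
      rw [div_lt_one (by positivity)]; linarith
    linarith
  have hFpos : 0 < 1 - ρ₀ ^ 3 / ρ ^ 3 := by
    have h : ρ₀ ^ 3 / ρ ^ 3 < 1 := by rw [div_lt_one (by positivity)]; linarith
    linarith
  set A := (1 - ρ₀ ^ 3 / (4 * ρ ^ 3)) ^ ((1:ℝ)/3) with hAdef
  have hApos : 0 < A := Real.rpow_pos_of_pos hgpos _
  have hA3 : A ^ 3 = 1 - ρ₀ ^ 3 / (4 * ρ ^ 3) := by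
    rw [hAdef, ← Real.rpow_natCast _ 3, ← Real.rpow_mul hgpos.le]; norm_num
  have hA2 : (1 - ρ₀ ^ 3 / (4 * ρ ^ 3)) ^ ((2:ℝ)/3) = A ^ 2 := by
    rw [hAdef, ← Real.rpow_natCast _ 2, ← Real.rpow_mul hgpos.le]; norm_num
  have hAm2 : (1 - ρ₀ ^ 3 / (4 * ρ ^ 3)) ^ ((1:ℝ)/3 - 1) = (A ^ 2)⁻¹ := by
    rw [show (1:ℝ)/3 - 1 = -(2/3) by norm_num, Real.rpow_neg hgpos.le, ← hA2]
  have hAm1 : (1 - ρ₀ ^ 3 / (4 * ρ ^ 3)) ^ ((2:ℝ)/3 - 1) = A⁻¹ := by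
    rw [show (2:ℝ)/3 - 1 = -(1/3) by norm_num, Real.rpow_neg hgpos.le, ← hAdef]
  set sf := Real.sqrt (1 - ρ₀ ^ 3 / ρ ^ 3) with hsfdef
  have hsfpos : 0 < sf := Real.sqrt_pos.mpr hFpos
  have hsf2 : sf ^ 2 = 1 - ρ₀ ^ 3 / ρ ^ 3 := Real.sq_sqrt hFpos.le
  have hDg : HasDerivAt (fun x : ℝ => 1 - ρ₀ ^ 3 / (4 * x ^ 3)) (3 * ρ₀ ^ 3 / (4 * ρ ^ 4)) ρ := by
    have h1 : HasDerivAt (fun x : ℝ => 4 * x ^ 3) (4 * ((3:ℕ) * ρ ^ 2)) ρ := by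
      exact (hasDerivAt_pow 3 ρ).const_mul (4:ℝ)
    have h3 := (hasDerivAt_const ρ (1:ℝ)).sub
      ((hasDerivAt_const ρ (ρ₀ ^ 3)).div h1 (by positivity))
    refine h3.congr_deriv ?_
    field_simp
    ring
  have hgne : (1 - ρ₀ ^ 3 / (4 * ρ ^ 3)) ≠ 0 := hgpos.ne'
  have hDA := hDg.rpow_const (p := (1:ℝ)/3) (Or.inl hgne)
  have hDA2 := hDg.rpow_const (p := (2:ℝ)/3) (Or.inl hgne)
  have hDF : HasDerivAt (fun x : ℝ => 1 - ρ₀ ^ 3 / x ^ 3) (3 * ρ₀ ^ 3 / ρ ^ 4) ρ := by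
    have h3 := (hasDerivAt_const ρ (1:ℝ)).sub
      ((hasDerivAt_const ρ (ρ₀ ^ 3)).div (hasDerivAt_pow 3 ρ) (by positivity))
    refine h3.congr_deriv ?_
    field_simp
    ring
  have hFne : (1 - ρ₀ ^ 3 / ρ ^ 3) ≠ 0 := hFpos.ne'
  have hDsf := hDF.sqrt hFne
  have hA3' : 4 * ρ ^ 3 * A ^ 3 = 4 * ρ ^ 3 - ρ₀ ^ 3 := by
    rw [hA3]; field_simp
  have hsf2' : ρ ^ 3 * sf ^ 2 = ρ ^ 3 - ρ₀ ^ 3 := by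
    rw [hsf2]; field_simp
  -- z¹ derivatives
  have e11 : pd1 (fun ρ θ ψ => ρ * (1 - ρ₀ ^ 3 / (4 * ρ ^ 3)) ^ ((1 : ℝ) / 3) * cos θ * cos ψ) ρ θ ψ
      = (A ^ 2)⁻¹ * cos θ * cos ψ := by
    have h := (((hasDerivAt_id' (x := ρ)).mul hDA).mul_const (cos θ)).mul_const (cos ψ)
    simp only [Pi.mul_apply, Pi.sub_apply, Pi.pow_apply] at h
    rw [pd1, h.deriv, hAm2, ← hAdef]
    field_simp
    linear_combination (cos θ * cos ψ) * hA3'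
  have e12 : pd2 (fun ρ θ ψ => ρ * (1 - ρ₀ ^ 3 / (4 * ρ ^ 3)) ^ ((1 : ℝ) / 3) * cos θ * cos ψ) ρ θ ψ
      = -(ρ * A * sin θ * cos ψ) := by
    have h := (((hasDerivAt_cos θ).const_mul (ρ * A)).mul_const (cos ψ))
    rw [pd2]
    rw [show (fun x => ρ * (1 - ρ₀ ^ 3 / (4 * ρ ^ 3)) ^ ((1 : ℝ) / 3) * cos x * cos ψ)
        = (fun x => (ρ * A) * cos x * cos ψ) by rw [hAdef]]
    rw [h.deriv]; ring
  have e13 : pd3 (fun ρ θ ψ => ρ * (1 - ρ₀ ^ 3 / (4 * ρ ^ 3)) ^ ((1 : ℝ) / 3) * cos θ * cos ψ) ρ θ ψ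
      = -(ρ * A * cos θ * sin ψ) := by
    have h := ((hasDerivAt_cos ψ).const_mul (ρ * A * cos θ))
    rw [pd3]
    rw [show (fun x => ρ * (1 - ρ₀ ^ 3 / (4 * ρ ^ 3)) ^ ((1 : ℝ) / 3) * cos θ * cos x)
        = (fun x => (ρ * A * cos θ) * cos x) by rw [hAdef]]
    rw [h.deriv]; ring
  -- z² derivatives
  have e21 : pd1 (fun ρ θ _ => (1 / 2) * ρ ^ 2 * (1 - ρ₀ ^ 3 / (4 * ρ ^ 3)) ^ ((2 : ℝ) / 3) *
        ((cos θ) ^ 2 - (sin θ) ^ 2)) ρ θ ψ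
      = ρ * A⁻¹ * ((cos θ) ^ 2 - (sin θ) ^ 2) := by
    have h := ((((hasDerivAt_pow 2 ρ).const_mul (1/2 : ℝ)).mul hDA2).mul_const
      ((cos θ) ^ 2 - (sin θ) ^ 2))
    simp only [Pi.mul_apply, Pi.sub_apply, Pi.pow_apply] at h
    rw [pd1, h.deriv, hAm1, hA2]
    field_simp
    linear_combination (2 * ((cos θ) ^ 2 - (sin θ) ^ 2)) * hA3'
  have e22 : pd2 (fun ρ θ _ => (1 / 2) * ρ ^ 2 * (1 - ρ₀ ^ 3 / (4 * ρ ^ 3)) ^ ((2 : ℝ) / 3) *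
        ((cos θ) ^ 2 - (sin θ) ^ 2)) ρ θ ψ
      = -(2 * ρ ^ 2 * A ^ 2 * sin θ * cos θ) := by
    have h := (((hasDerivAt_cos θ).pow 2).sub ((hasDerivAt_sin θ).pow 2)).const_mul
      ((1/2 : ℝ) * ρ ^ 2 * A ^ 2)
    rw [pd2]
    rw [show (fun x => (1 / 2) * ρ ^ 2 * (1 - ρ₀ ^ 3 / (4 * ρ ^ 3)) ^ ((2 : ℝ) / 3) *
        ((cos x) ^ 2 - (sin x) ^ 2))
        = (fun x => ((1/2 : ℝ) * ρ ^ 2 * A ^ 2) * ((cos x) ^ 2 - (sin x) ^ 2)) by rw [hA2]]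
    simp only [Pi.mul_apply, Pi.sub_apply, Pi.pow_apply] at h
    rw [h.deriv]; ring
  have e23 : pd3 (fun ρ θ _ => (1 / 2) * ρ ^ 2 * (1 - ρ₀ ^ 3 / (4 * ρ ^ 3)) ^ ((2 : ℝ) / 3) *
        ((cos θ) ^ 2 - (sin θ) ^ 2)) ρ θ ψ = 0 := by
    rw [pd3]; exact deriv_const ψ _
  -- r derivatives
  have e01 : pd1 (fun ρ θ ψ => ρ ^ 2 * Real.sqrt (1 - ρ₀ ^ 3 / ρ ^ 3) * sin θ * cos θ * sin ψ)
        ρ θ ψ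
      = 2 * ρ * A ^ 3 * sf⁻¹ * sin θ * cos θ * sin ψ := by
    have h := ((((hasDerivAt_pow 2 ρ).mul hDsf).mul_const (sin θ)).mul_const (cos θ)).mul_const
      (sin ψ)
    simp only [Pi.mul_apply, Pi.sub_apply, Pi.pow_apply] at h
    rw [pd1, h.deriv, ← hsfdef]
    field_simp
    linear_combination (4 * (sin θ * cos θ * sin ψ)) * hsf2'
      - ((sin θ * cos θ * sin ψ)) * hA3'
  have e02 : pd2 (fun ρ θ ψ => ρ ^ 2 * Real.sqrt (1 - ρ₀ ^ 3 / ρ ^ 3) * sin θ * cos θ * sin ψ)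
        ρ θ ψ
      = ρ ^ 2 * sf * ((cos θ) ^ 2 - (sin θ) ^ 2) * sin ψ := by
    have h := ((((hasDerivAt_sin θ).const_mul (ρ ^ 2 * sf)).mul (hasDerivAt_cos θ)).mul_const
      (sin ψ))
    rw [pd2]
    rw [show (fun x => ρ ^ 2 * Real.sqrt (1 - ρ₀ ^ 3 / ρ ^ 3) * sin x * cos x * sin ψ)
        = (fun x => ((ρ ^ 2 * sf) * sin x) * cos x * sin ψ) by rw [hsfdef]]
    simp only [Pi.mul_apply, Pi.sub_apply, Pi.pow_apply] at h
    rw [h.deriv]; ring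
  have e03 : pd3 (fun ρ θ ψ => ρ ^ 2 * Real.sqrt (1 - ρ₀ ^ 3 / ρ ^ 3) * sin θ * cos θ * sin ψ)
        ρ θ ψ
      = ρ ^ 2 * sf * sin θ * cos θ * cos ψ := by
    have h := (hasDerivAt_sin ψ).const_mul (ρ ^ 2 * sf * sin θ * cos θ)
    rw [pd3]
    rw [show (fun x => ρ ^ 2 * Real.sqrt (1 - ρ₀ ^ 3 / ρ ^ 3) * sin θ * cos θ * sin x)
        = (fun x => (ρ ^ 2 * sf * sin θ * cos θ) * sin x) by rw [hsfdef]]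
    rw [h.deriv]
  have hcos : 0 < cos θ := Real.cos_pos_of_mem_Ioo ⟨by linarith [Real.pi_pos], hθ1⟩
  have hsc : sin θ ^ 2 + cos θ ^ 2 = 1 := Real.sin_sq_add_cos_sq θ
  simp only [pairingF, e11, e12, e13, e21, e22, e23, e01, e02, e03]
  rw [← hsf2]
  field_simp
  linear_combination (cos θ ^ 2 * ρ ^ 4 * cos ψ ^ 2 * A ^ 6 * sf ^ 2 * sin θ ^ 2 * (sin θ ^ 2 + cos θ ^ 2 + 1)) * hsc
end

section
/- Define on the region U = {(ρ,θ,ψ) : ρ > 0, 0 < θ < π/2, 0 < ψ < π/2} the functions r(ρ,θ,ψ) = ρ³ sin θ cos²θ sin ψ cos ψ, z¹(ρ,θ,ψ) = ½ ρ² cos²θ (cos²ψ − sin²ψ), and z²(ρ,θ,ψ) = ¼ ρ² (3cos²θ − 2). Then for α = 1, 2 and all (ρ,θ,ψ) ∈ U one has ⟨∇r, ∇z^α⟩ = 0, where ⟨∇u, ∇v⟩ = (∂_ρ u)(∂_ρ v) + ρ⁻²(∂_θ u)(∂_θ v) + ρ⁻² cos⁻²θ (∂_ψ u)(∂_ψ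 v). -/
open Real

/-- Orthogonality `⟨∇r, ∇z^α⟩ = 0`, `α = 1,2`, for the canonical coordinates of
seven-dimensional Minkowski space. -/
theorem stmt_12 (ρ θ ψ : ℝ) (hρ : 0 < ρ) (hθ0 : 0 < θ) (hθ1 : θ < π / 2)
    (hψ0 : 0 < ψ) (hψ1 : ψ < π / 2) :
    pairing (fun ρ θ ψ => ρ ^ 3 * sin θ * (cos θ) ^ 2 * sin ψ * cos ψ)
        (fun ρ θ ψ => (1 / 2) * ρ ^ 2 * (cos θ) ^ 2 * ((cos ψ) ^ 2 - (sin ψ) ^ 2)) ρ θ ψ = 0 ∧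
    pairing (fun ρ θ ψ => ρ ^ 3 * sin θ * (cos θ) ^ 2 * sin ψ * cos ψ)
        (fun ρ θ _ => (1 / 4) * ρ ^ 2 * (3 * (cos θ) ^ 2 - 2)) ρ θ ψ = 0 := by
  have hc : cos θ ≠ 0 := ne_of_gt (cos_pos_of_mem_Ioo ⟨by linarith [pi_pos], hθ1⟩)
  have hρ' : ρ ≠ 0 := ne_of_gt hρ
  -- derivatives of r
  have dr1 : pd1 (fun ρ θ ψ => ρ ^ 3 * sin θ * (cos θ) ^ 2 * sin ψ * cos ψ) ρ θ ψ
      = 3 * ρ ^ 2 * sin θ * (cos θ) ^ 2 * sin ψ * cos ψ := by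
    unfold pd1
    have := (((((hasDerivAt_pow 3 ρ).mul_const (sin θ)).mul_const ((cos θ) ^ 2)).mul_const
      (sin ψ)).mul_const (cos ψ)).deriv
    rw [this]; ring
  have dr2 : pd2 (fun ρ θ ψ => ρ ^ 3 * sin θ * (cos θ) ^ 2 * sin ψ * cos ψ) ρ θ ψ
      = ρ ^ 3 * (cos θ ^ 3 - 2 * sin θ ^ 2 * cos θ) * sin ψ * cos ψ := by
    unfold pd2
    have := (((((hasDerivAt_sin θ).const_mul (ρ ^ 3)).mul ((hasDerivAt_cos θ).pow 2)).mul_const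
      (sin ψ)).mul_const (cos ψ)).deriv
    exact this.trans (by push_cast [Pi.pow_apply]; ring)
  have dr3 : pd3 (fun ρ θ ψ => ρ ^ 3 * sin θ * (cos θ) ^ 2 * sin ψ * cos ψ) ρ θ ψ
      = ρ ^ 3 * sin θ * (cos θ) ^ 2 * (cos ψ ^ 2 - sin ψ ^ 2) := by
    unfold pd3
    have := (((hasDerivAt_sin ψ).const_mul (ρ ^ 3 * sin θ * (cos θ) ^ 2)).mul
      (hasDerivAt_cos ψ)).deriv
    exact this.trans (by push_cast [Pi.pow_apply]; ring)
  constructor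
  · have d1 : pd1 (fun ρ θ ψ => (1 / 2) * ρ ^ 2 * (cos θ) ^ 2 * ((cos ψ) ^ 2 - (sin ψ) ^ 2)) ρ θ ψ
        = ρ * (cos θ) ^ 2 * ((cos ψ) ^ 2 - (sin ψ) ^ 2) := by
      unfold pd1
      have := ((((hasDerivAt_pow 2 ρ).const_mul (1/2 : ℝ)).mul_const ((cos θ) ^ 2)).mul_const
        ((cos ψ) ^ 2 - (sin ψ) ^ 2)).deriv
      rw [this]; ring
    have d2 : pd2 (fun ρ θ ψ => (1 / 2) * ρ ^ 2 * (cos θ) ^ 2 * ((cos ψ) ^ 2 - (sin ψ) ^ 2)) ρ θ ψ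
        = -(ρ ^ 2 * sin θ * cos θ * ((cos ψ) ^ 2 - (sin ψ) ^ 2)) := by
      unfold pd2
      have := ((((hasDerivAt_cos θ).pow 2).const_mul ((1/2 : ℝ) * ρ ^ 2)).mul_const
        ((cos ψ) ^ 2 - (sin ψ) ^ 2)).deriv
      exact this.trans (by push_cast [Pi.pow_apply]; ring)
    have d3 : pd3 (fun ρ θ ψ => (1 / 2) * ρ ^ 2 * (cos θ) ^ 2 * ((cos ψ) ^ 2 - (sin ψ) ^ 2)) ρ θ ψ
        = -(2 * ρ ^ 2 * (cos θ) ^ 2 * sin ψ * cos ψ) := by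
      unfold pd3
      have := ((((hasDerivAt_cos ψ).pow 2).sub ((hasDerivAt_sin ψ).pow 2)).const_mul
        ((1/2 : ℝ) * ρ ^ 2 * (cos θ) ^ 2)).deriv
      exact this.trans (by push_cast [Pi.pow_apply]; ring)
    unfold pairing
    rw [dr1, dr2, dr3, d1, d2, d3]
    field_simp
    linear_combination (2 * ρ ^ 3 * sin θ * cos θ ^ 2 * sin ψ * cos ψ *
      ((cos ψ) ^ 2 - (sin ψ) ^ 2)) * sin_sq_add_cos_sq θ
  · have d1 : pd1 (fun ρ θ _ => (1 / 4) * ρ ^ 2 * (3 * (cos θ) ^ 2 - 2)) ρ θ ψ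
        = (1/2) * ρ * (3 * (cos θ) ^ 2 - 2) := by
      unfold pd1
      have := (((hasDerivAt_pow 2 ρ).const_mul (1/4 : ℝ)).mul_const
        (3 * (cos θ) ^ 2 - 2)).deriv
      rw [this]; ring
    have d2 : pd2 (fun ρ θ _ => (1 / 4) * ρ ^ 2 * (3 * (cos θ) ^ 2 - 2)) ρ θ ψ
        = -(3/2 * ρ ^ 2 * sin θ * cos θ) := by
      unfold pd2
      have := (((((hasDerivAt_cos θ).pow 2).const_mul (3 : ℝ)).sub_const 2).const_mul
        ((1/4 : ℝ) * ρ ^ 2)).deriv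
      exact this.trans (by push_cast [Pi.pow_apply]; ring)
    have d3 : pd3 (fun ρ θ _ => (1 / 4) * ρ ^ 2 * (3 * (cos θ) ^ 2 - 2)) ρ θ ψ = 0 := by
      unfold pd3
      exact deriv_const ψ _
    unfold pairing
    rw [dr1, dr2, dr3, d1, d2, d3]
    field_simp
    linear_combination (6 * ρ ^ 3 * sin θ * (cos θ) ^ 2 * sin ψ * cos ψ) * sin_sq_add_cos_sq θ
end

section
/- Define on the region U = {(ρ,θ,ψ) : ρ > 0, 0 < θ < π/2, 0 < ψ < π/2} the functions r = ρ³ sin θ cos²θ sin ψ cos ψ, z¹ = ½ ρ² cos²θ (cos²ψ − sin²ψ), and z² = ¼ ρ² (3cos²θ − 2). With the pairing ⟨∇u, ∇v⟩ = (∂_ρ u)(∂_ρ v) + ρ⁻²(∂_θ u)(∂_θ v) + ρ⁻² cos⁻²θ (∂_ψ u)(∂_ψ v), one has for all (ρ,θ,ψ) ∈ U the Gram determinant identity ⟨∇z¹,∇z¹⟩·⟨∇z²,∇z²⟩ − ⟨∇z¹,∇z²⟩² = ⟨∇r,∇r⟩. -/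
open Real

set_option maxHeartbeats 1000000 in
/-- The Gram determinant identity (`λ = 1`) for the canonical coordinates of
seven-dimensional Minkowski space. -/
theorem stmt_14 (ρ θ ψ : ℝ) (hρ : 0 < ρ) (hθ0 : 0 < θ) (hθ1 : θ < π / 2)
    (hψ0 : 0 < ψ) (hψ1 : ψ < π / 2) :
    pairing (fun ρ θ ψ => (1 / 2) * ρ ^ 2 * (cos θ) ^ 2 * ((cos ψ) ^ 2 - (sin ψ) ^ 2))
        (fun ρ θ ψ => (1 / 2) * ρ ^ 2 * (cos θ) ^ 2 * ((cos ψ) ^ 2 - (sin ψ) ^ 2)) ρ θ ψ *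
      pairing (fun ρ θ _ => (1 / 4) * ρ ^ 2 * (3 * (cos θ) ^ 2 - 2))
        (fun ρ θ _ => (1 / 4) * ρ ^ 2 * (3 * (cos θ) ^ 2 - 2)) ρ θ ψ -
      (pairing (fun ρ θ ψ => (1 / 2) * ρ ^ 2 * (cos θ) ^ 2 * ((cos ψ) ^ 2 - (sin ψ) ^ 2))
        (fun ρ θ _ => (1 / 4) * ρ ^ 2 * (3 * (cos θ) ^ 2 - 2)) ρ θ ψ) ^ 2
      = pairing (fun ρ θ ψ => ρ ^ 3 * sin θ * (cos θ) ^ 2 * sin ψ * cos ψ)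
          (fun ρ θ ψ => ρ ^ 3 * sin θ * (cos θ) ^ 2 * sin ψ * cos ψ) ρ θ ψ := by
  have hc : cos θ ≠ 0 := (cos_pos_of_mem_Ioo ⟨by linarith [pi_pos], hθ1⟩).ne'
  have hρ' : ρ ≠ 0 := hρ.ne'
  have d11 : deriv (fun x : ℝ => (1/2) * x ^ 2 * (cos θ) ^ 2 * ((cos ψ) ^ 2 - (sin ψ) ^ 2)) ρ
      = ρ * (cos θ) ^ 2 * ((cos ψ) ^ 2 - (sin ψ) ^ 2) := by
    have h := (((hasDerivAt_pow 2 ρ).const_mul (1/2 : ℝ)).mul_const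
      ((cos θ) ^ 2)).mul_const ((cos ψ) ^ 2 - (sin ψ) ^ 2)
    rw [h.deriv]; push_cast; ring
  have d12 : deriv (fun x : ℝ => (1/2) * ρ ^ 2 * (cos x) ^ 2 * ((cos ψ) ^ 2 - (sin ψ) ^ 2)) θ
      = -(ρ ^ 2 * sin θ * cos θ) * ((cos ψ) ^ 2 - (sin ψ) ^ 2) := by
    have h := (((Real.hasDerivAt_cos θ).pow 2).const_mul ((1/2 : ℝ) * ρ ^ 2)).mul_const
      ((cos ψ) ^ 2 - (sin ψ) ^ 2)
    erw [h.deriv]; push_cast; ring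
  have d13 : deriv (fun x : ℝ => (1/2) * ρ ^ 2 * (cos θ) ^ 2 * ((cos x) ^ 2 - (sin x) ^ 2)) ψ
      = -(2 * ρ ^ 2 * (cos θ) ^ 2 * sin ψ * cos ψ) := by
    have h := (((Real.hasDerivAt_cos ψ).pow 2).sub
      ((Real.hasDerivAt_sin ψ).pow 2)).const_mul ((1/2 : ℝ) * ρ ^ 2 * (cos θ) ^ 2)
    erw [h.deriv]; push_cast; ring
  have d21 : deriv (fun x : ℝ => (1/4) * x ^ 2 * (3 * (cos θ) ^ 2 - 2)) ρ
      = (1/2) * ρ * (3 * (cos θ) ^ 2 - 2) := by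
    have h := ((hasDerivAt_pow 2 ρ).const_mul (1/4 : ℝ)).mul_const (3 * (cos θ) ^ 2 - 2)
    rw [h.deriv]; push_cast; ring
  have d22 : deriv (fun x : ℝ => (1/4) * ρ ^ 2 * (3 * (cos x) ^ 2 - 2)) θ
      = -(3/2) * ρ ^ 2 * sin θ * cos θ := by
    have h := ((((Real.hasDerivAt_cos θ).pow 2).const_mul (3 : ℝ)).sub_const (2 : ℝ)).const_mul
      ((1/4 : ℝ) * ρ ^ 2)
    erw [h.deriv]; push_cast; ring
  have d23 : deriv (fun x : ℝ => (1/4) * ρ ^ 2 * (3 * (cos θ) ^ 2 - 2)) ψ = 0 := by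
    simp
  have d31 : deriv (fun x : ℝ => x ^ 3 * sin θ * (cos θ) ^ 2 * sin ψ * cos ψ) ρ
      = 3 * ρ ^ 2 * sin θ * (cos θ) ^ 2 * sin ψ * cos ψ := by
    have h := ((((hasDerivAt_pow 3 ρ).mul_const (sin θ)).mul_const
      ((cos θ) ^ 2)).mul_const (sin ψ)).mul_const (cos ψ)
    rw [h.deriv]; push_cast; ring
  have d32 : deriv (fun x : ℝ => ρ ^ 3 * sin x * (cos x) ^ 2 * sin ψ * cos ψ) θ
      = ρ ^ 3 * ((cos θ) ^ 3 - 2 * (sin θ) ^ 2 * cos θ) * sin ψ * cos ψ := by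
    have h := ((((Real.hasDerivAt_sin θ).const_mul (ρ ^ 3)).mul
      ((Real.hasDerivAt_cos θ).pow 2)).mul_const (sin ψ)).mul_const (cos ψ)
    erw [h.deriv]; simp only [Pi.pow_apply]; push_cast; ring
  have d33 : deriv (fun x : ℝ => ρ ^ 3 * sin θ * (cos θ) ^ 2 * sin x * cos x) ψ
      = ρ ^ 3 * sin θ * (cos θ) ^ 2 * ((cos ψ) ^ 2 - (sin ψ) ^ 2) := by
    have h := ((Real.hasDerivAt_sin ψ).const_mul (ρ ^ 3 * sin θ * (cos θ) ^ 2)).mul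
      (Real.hasDerivAt_cos ψ)
    erw [h.deriv]; push_cast; ring
  simp only [pairing, pd1, pd2, pd3, d11, d12, d13, d21, d22, d23, d31, d32, d33]
  have h1 : (sin θ) ^ 2 + (cos θ) ^ 2 = 1 := sin_sq_add_cos_sq θ
  have har : (ρ ^ 2)⁻¹ * ρ ^ 2 = 1 := inv_mul_cancel₀ (pow_ne_zero 2 hρ')
  have hbc : ((cos θ) ^ 2)⁻¹ * (cos θ) ^ 2 = 1 := inv_mul_cancel₀ (pow_ne_zero 2 hc)
  linear_combination
    (ρ ^ 4 * ((-1) * (cos θ) ^ 6 * (sin ψ) ^ 2 * (cos ψ) ^ 2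
        + (sin θ) ^ 2 * (cos θ) ^ 2 * (cos ψ) ^ 4
        - 2 * (sin θ) ^ 2 * (cos θ) ^ 2 * (sin ψ) ^ 2 * (cos ψ) ^ 2
        + (sin θ) ^ 2 * (cos θ) ^ 2 * (sin ψ) ^ 4
        + 4 * (sin θ) ^ 2 * (cos θ) ^ 4 * (sin ψ) ^ 2 * (cos ψ) ^ 2
        - 4 * (sin θ) ^ 4 * (cos θ) ^ 2 * (sin ψ) ^ 2 * (cos ψ) ^ 2)
      + ((cos θ) ^ 2)⁻¹ * ρ ^ 4 * (4 * (cos θ) ^ 4 * (sin ψ) ^ 2 * (cos ψ) ^ 2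
        - 12 * (cos θ) ^ 6 * (sin ψ) ^ 2 * (cos ψ) ^ 2
        + 9 * (cos θ) ^ 8 * (sin ψ) ^ 2 * (cos ψ) ^ 2
        - (sin θ) ^ 2 * (cos θ) ^ 4 * (cos ψ) ^ 4
        + 2 * (sin θ) ^ 2 * (cos θ) ^ 4 * (sin ψ) ^ 2 * (cos ψ) ^ 2
        - (sin θ) ^ 2 * (cos θ) ^ 4 * (sin ψ) ^ 4
        + 9 * (sin θ) ^ 2 * (cos θ) ^ 6 * (sin ψ) ^ 2 * (cos ψ) ^ 2)
      + 9 * (ρ ^ 2)⁻¹ * ((cos θ) ^ 2)⁻¹ * ρ ^ 6 * (sin θ) ^ 2 * (cos θ) ^ 6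
          * (sin ψ) ^ 2 * (cos ψ) ^ 2) * har
    + (ρ ^ 4 * (4 * (cos θ) ^ 2 * (sin ψ) ^ 2 * (cos ψ) ^ 2
        - 12 * (cos θ) ^ 4 * (sin ψ) ^ 2 * (cos ψ) ^ 2
        + 9 * (cos θ) ^ 6 * (sin ψ) ^ 2 * (cos ψ) ^ 2
        - (sin θ) ^ 2 * (cos θ) ^ 2 * (cos ψ) ^ 4
        + 2 * (sin θ) ^ 2 * (cos θ) ^ 2 * (sin ψ) ^ 2 * (cos ψ) ^ 2
        - (sin θ) ^ 2 * (cos θ) ^ 2 * (sin ψ) ^ 4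
        + 9 * (sin θ) ^ 2 * (cos θ) ^ 4 * (sin ψ) ^ 2 * (cos ψ) ^ 2)) * hbc
    + (ρ ^ 4 * ((-4) * (cos θ) ^ 2 + 8 * (cos θ) ^ 4
        - 4 * (sin θ) ^ 2 * (cos θ) ^ 2) * (sin ψ) ^ 2 * (cos ψ) ^ 2) * h1
end

section
/- Fix real numbers k, l, C and define on U'' = {(ρ,θ,ψ) : ρ > 0, 0 < θ < π/2, 3cos²θ − 2 > 0, 0 < ψ < π/4} the functions r = ρ³ sin θ cos²θ sin ψ cos ψ and z = C ρ^k (cos θ)^{2l} (3cos²θ − 2)^{k/2 − l} (cos²ψ − sin²ψ)^{l}. Then for all (ρ,θ,ψ) ∈ U'', ⟨∇r, ∇z⟩ = 0, where ⟨∇u, ∇v⟩ = (∂_ρ u)(∂_ρ v) + ρ⁻²(∂_θ u)(∂_θ v) + ρ⁻² cos⁻²θ (∂_ψ u)(∂_ψ v). -/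
open Real

/-- For any real constants `k, l, C` the ansatz
`z = C ρ^k (cos θ)^{2l} (3cos²θ − 2)^{k/2 − l} (cos 2ψ)^l` is orthogonal to
`r = ρ³ sin θ cos²θ sin ψ cos ψ` on the region `ρ > 0`, `0 < θ < π/2` with
`3cos²θ − 2 > 0`, and `0 < ψ < π/4`. -/
theorem stmt_15 (k l C : ℝ) (ρ θ ψ : ℝ) (hρ : 0 < ρ) (hθ0 : 0 < θ) (hθ1 : θ < π / 2)
    (hθ2 : 3 * (cos θ) ^ 2 - 2 > 0) (hψ0 : 0 < ψ) (hψ1 : ψ < π / 4) :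
    pairing (fun ρ θ ψ => ρ ^ 3 * sin θ * (cos θ) ^ 2 * sin ψ * cos ψ)
        (fun ρ θ ψ =>
          C * ρ ^ k * (cos θ) ^ (2 * l) * (3 * (cos θ) ^ 2 - 2) ^ (k / 2 - l) *
            ((cos ψ) ^ 2 - (sin ψ) ^ 2) ^ l)
        ρ θ ψ = 0 := by
  have hπ := Real.pi_pos
  have hc : 0 < cos θ := cos_pos_of_mem_Ioo ⟨by linarith, hθ1⟩
  have hw : 0 < cos ψ ^ 2 - sin ψ ^ 2 := by
    have h := cos_pos_of_mem_Ioo (x := 2 * ψ) ⟨by linarith, by linarith⟩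
    rw [cos_two_mul] at h
    nlinarith [sin_sq_add_cos_sq ψ]
  -- abbreviations
  have hρ0 : ρ ≠ 0 := hρ.ne'
  have hc0 : cos θ ≠ 0 := hc.ne'
  have h20 : 3 * cos θ ^ 2 - 2 ≠ 0 := hθ2.ne'
  have hw0 : cos ψ ^ 2 - sin ψ ^ 2 ≠ 0 := hw.ne'
  -- derivatives of u
  have e1u : pd1 (fun ρ θ ψ => ρ ^ 3 * sin θ * (cos θ) ^ 2 * sin ψ * cos ψ) ρ θ ψ
      = (3 : ℝ) * ρ ^ 2 * sin θ * cos θ ^ 2 * sin ψ * cos ψ := by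
    unfold pd1
    have h := ((((hasDerivAt_pow 3 ρ).mul_const (sin θ)).mul_const (cos θ ^ 2)).mul_const
      (sin ψ)).mul_const (cos ψ)
    rw [h.deriv]
    norm_num
  have e2u : pd2 (fun ρ θ ψ => ρ ^ 3 * sin θ * (cos θ) ^ 2 * sin ψ * cos ψ) ρ θ ψ
      = ρ ^ 3 * cos θ * (3 * cos θ ^ 2 - 2) * sin ψ * cos ψ := by
    unfold pd2
    have h := ((((Real.hasDerivAt_sin θ).const_mul (ρ ^ 3)).mul
      ((Real.hasDerivAt_cos θ).pow 2)).mul_const (sin ψ)).mul_const (cos ψ)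
    erw [h.deriv]
    simp only [Pi.pow_apply]
    have hs := sin_sq_add_cos_sq θ
    push_cast
    linear_combination (-2 * ρ ^ 3 * sin ψ * cos ψ * cos θ) * hs
  have e3u : pd3 (fun ρ θ ψ => ρ ^ 3 * sin θ * (cos θ) ^ 2 * sin ψ * cos ψ) ρ θ ψ
      = ρ ^ 3 * sin θ * cos θ ^ 2 * (cos ψ ^ 2 - sin ψ ^ 2) := by
    unfold pd3
    have h := (((Real.hasDerivAt_sin ψ).const_mul (ρ ^ 3 * sin θ * cos θ ^ 2)).mul
      (Real.hasDerivAt_cos ψ))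
    erw [h.deriv]
    ring
  -- derivatives of v
  have e1v : pd1 (fun ρ θ ψ => C * ρ ^ k * (cos θ) ^ (2 * l) * (3 * (cos θ) ^ 2 - 2) ^ (k / 2 - l) *
        ((cos ψ) ^ 2 - (sin ψ) ^ 2) ^ l) ρ θ ψ
      = C * (k * (ρ ^ k / ρ)) * (cos θ) ^ (2 * l) * (3 * (cos θ) ^ 2 - 2) ^ (k / 2 - l) *
        ((cos ψ) ^ 2 - (sin ψ) ^ 2) ^ l := by
    unfold pd1
    have h := ((((Real.hasDerivAt_rpow_const (x := ρ) (p := k) (Or.inl hρ0)).const_mul C).mul_const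
      ((cos θ) ^ (2 * l))).mul_const ((3 * (cos θ) ^ 2 - 2) ^ (k / 2 - l))).mul_const
      (((cos ψ) ^ 2 - (sin ψ) ^ 2) ^ l)
    rw [h.deriv, Real.rpow_sub hρ, Real.rpow_one]
  have e2v : pd2 (fun ρ θ ψ => C * ρ ^ k * (cos θ) ^ (2 * l) * (3 * (cos θ) ^ 2 - 2) ^ (k / 2 - l) *
        ((cos ψ) ^ 2 - (sin ψ) ^ 2) ^ l) ρ θ ψ
      = ((C * ρ ^ k * ((-sin θ) * (2 * l) * ((cos θ) ^ (2 * l) / cos θ))) *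
          ((3 * (cos θ) ^ 2 - 2) ^ (k / 2 - l))
        + (C * ρ ^ k * (cos θ) ^ (2 * l)) *
          ((3 * (2 * cos θ ^ 1 * (-sin θ))) * (k / 2 - l) *
            ((3 * (cos θ) ^ 2 - 2) ^ (k / 2 - l) / (3 * (cos θ) ^ 2 - 2)))) *
        ((cos ψ) ^ 2 - (sin ψ) ^ 2) ^ l := by
    unfold pd2
    have hQ : HasDerivAt (fun x => (cos x) ^ (2 * l))
        ((-sin θ) * (2 * l) * (cos θ) ^ (2 * l - 1)) θ :=
      (Real.hasDerivAt_cos θ).rpow_const (Or.inl hc0)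
    have hg : HasDerivAt (fun x => 3 * (cos x) ^ 2 - 2)
        (3 * (2 * cos θ ^ 1 * (-sin θ))) θ :=
      (((Real.hasDerivAt_cos θ).pow 2).const_mul 3).sub_const 2
    have hR : HasDerivAt (fun x => (3 * (cos x) ^ 2 - 2) ^ (k / 2 - l))
        ((3 * (2 * cos θ ^ 1 * (-sin θ))) * (k / 2 - l) *
          (3 * (cos θ) ^ 2 - 2) ^ (k / 2 - l - 1)) θ := hg.rpow_const (Or.inl h20)
    have h := (((hQ.const_mul (C * ρ ^ k)).mul hR).mul_const
      (((cos ψ) ^ 2 - (sin ψ) ^ 2) ^ l))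
    have hA : (cos θ) ^ (2 * l - 1) = (cos θ) ^ (2 * l) / cos θ := by
      rw [Real.rpow_sub hc, Real.rpow_one]
    have hB : (3 * (cos θ) ^ 2 - 2) ^ (k / 2 - l - 1)
        = (3 * (cos θ) ^ 2 - 2) ^ (k / 2 - l) / (3 * (cos θ) ^ 2 - 2) := by
      rw [Real.rpow_sub hθ2, Real.rpow_one]
    erw [h.deriv, hA, hB]
  have e3v : pd3 (fun ρ θ ψ => C * ρ ^ k * (cos θ) ^ (2 * l) * (3 * (cos θ) ^ 2 - 2) ^ (k / 2 - l) *
        ((cos ψ) ^ 2 - (sin ψ) ^ 2) ^ l) ρ θ ψ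
      = (C * ρ ^ k * (cos θ) ^ (2 * l) * (3 * (cos θ) ^ 2 - 2) ^ (k / 2 - l)) *
        ((2 * cos ψ ^ 1 * (-sin ψ) - 2 * sin ψ ^ 1 * cos ψ) * l *
          (((cos ψ) ^ 2 - (sin ψ) ^ 2) ^ l / ((cos ψ) ^ 2 - (sin ψ) ^ 2))) := by
    unfold pd3
    have hS : HasDerivAt (fun x => ((cos x) ^ 2 - (sin x) ^ 2) ^ l)
        ((2 * cos ψ ^ 1 * (-sin ψ) - 2 * sin ψ ^ 1 * cos ψ) * l *
          ((cos ψ) ^ 2 - (sin ψ) ^ 2) ^ (l - 1)) ψ :=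
      (((Real.hasDerivAt_cos ψ).pow 2).sub ((Real.hasDerivAt_sin ψ).pow 2)).rpow_const
        (Or.inl hw0)
    have h := hS.const_mul (C * ρ ^ k * (cos θ) ^ (2 * l) * (3 * (cos θ) ^ 2 - 2) ^ (k / 2 - l))
    have hW : ((cos ψ) ^ 2 - (sin ψ) ^ 2) ^ (l - 1)
        = ((cos ψ) ^ 2 - (sin ψ) ^ 2) ^ l / ((cos ψ) ^ 2 - (sin ψ) ^ 2) := by
      rw [Real.rpow_sub hw, Real.rpow_one]
    rw [h.deriv, hW]
  unfold pairing
  rw [e1u, e2u, e3u, e1v, e2v, e3v]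
  field_simp
  ring
end

section
/- Let ρ₀ > 0, f(ρ) = 1 − ρ₀⁴/ρ⁴, and define on V = {(ρ,θ,ψ) : ρ > ρ₀, 0 < θ < π/2, 0 < ψ < π/2} the functions r = ρ³ √(f(ρ)) sin θ cos²θ sin ψ cos ψ, z¹ = ½ √(ρ⁴ − ρ₀⁴/3) cos²θ (cos²ψ − sin²ψ), and z² = ¼ √(ρ⁴ − ρ₀⁴/3) (3cos²θ − 2). Then for α = 1, 2 and all (ρ,θ,ψ) ∈ V one has ⟨∇r, ∇z^α⟩ = 0, where ⟨∇u,∇v⟩ = f(ρ)(∂_ρ u)(∂_ρ v) + ρ⁻²(∂_θ u)(∂_θ v) + ρ⁻² cos⁻²θ (∂_ψ u)(∂_ψ v). Moreover the common radial profile b(ρ) = √(ρ⁴ − ρ₀⁴/3) satisfies b′(ρ)/b(ρ) = 6ρ³/(3ρ⁴ − ρ₀⁴). -/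
open Real

private lemma aux1 (ρ₀ : ℝ) (hρ₀ : 0 < ρ₀) (ρ θ ψ : ℝ) (hρ : ρ₀ < ρ) (hθ1 : 0 < θ) (hθ2 : θ < π / 2)
    (hψ1 : 0 < ψ) (hψ2 : ψ < π / 2) :
      pairingF (fun ρ => 1 - ρ₀ ^ 4 / ρ ^ 4)
          (fun ρ θ ψ =>
            ρ ^ 3 * Real.sqrt (1 - ρ₀ ^ 4 / ρ ^ 4) * sin θ * (cos θ) ^ 2 * sin ψ * cos ψ)
          (fun ρ θ ψ =>
            (1 / 2) * Real.sqrt (ρ ^ 4 - ρ₀ ^ 4 / 3) * (cos θ) ^ 2 *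
              ((cos ψ) ^ 2 - (sin ψ) ^ 2)) ρ θ ψ = 0 := by
  have hρpos : 0 < ρ := hρ₀.trans hρ
  have hρ4 : (ρ:ℝ) ^ 4 ≠ 0 := by positivity
  have h4 : ρ₀ ^ 4 < ρ ^ 4 := pow_lt_pow_left₀ hρ hρ₀.le (by norm_num)
  have hf : 0 < 1 - ρ₀ ^ 4 / ρ ^ 4 := by
    rw [sub_pos, div_lt_one (by positivity)]; exact h4
  have hB : 0 < ρ ^ 4 - ρ₀ ^ 4 / 3 := by nlinarith [pow_pos hρ₀ 4]
  have hcθ : 0 < cos θ := Real.cos_pos_of_mem_Ioo ⟨by linarith [pi_pos], hθ2⟩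
  -- derivative of 1 - ρ₀^4/x^4
  have hg : HasDerivAt (fun x : ℝ => 1 - ρ₀ ^ 4 / x ^ 4)
      (0 - (0 * ρ ^ 4 - ρ₀ ^ 4 * (4 * ρ ^ 3)) / (ρ ^ 4) ^ 2) ρ :=
    (hasDerivAt_const ρ (1:ℝ)).sub
      ((hasDerivAt_const ρ (ρ₀ ^ 4)).div (by simpa using hasDerivAt_pow 4 ρ) hρ4)
  have hsf := hg.sqrt hf.ne'
  have hρ3 : HasDerivAt (fun x : ℝ => x ^ 3) (3 * ρ ^ 2) ρ := by
    simpa using hasDerivAt_pow 3 ρ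
  have hB' : HasDerivAt (fun x : ℝ => x ^ 4 - ρ₀ ^ 4 / 3) (4 * ρ ^ 3) ρ := by
    simpa using (hasDerivAt_pow 4 ρ).sub_const (ρ₀ ^ 4 / 3)
  have hsb := hB'.sqrt hB.ne'
  have h1r := (((((hρ3.mul hsf).mul_const (sin θ)).mul_const ((cos θ) ^ 2)).mul_const
      (sin ψ)).mul_const (cos ψ)).deriv
  have h2r := ((((Real.hasDerivAt_sin θ).const_mul
      (ρ ^ 3 * Real.sqrt (1 - ρ₀ ^ 4 / ρ ^ 4))).mul
      ((Real.hasDerivAt_cos θ).pow 2)).mul_const (sin ψ)).mul_const (cos ψ) |>.deriv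
  have h3r := (((Real.hasDerivAt_sin ψ).const_mul
      (ρ ^ 3 * Real.sqrt (1 - ρ₀ ^ 4 / ρ ^ 4) * sin θ * (cos θ) ^ 2)).mul
      (Real.hasDerivAt_cos ψ)).deriv
  have h1z := (((hsb.const_mul (1/2 : ℝ)).mul_const ((cos θ) ^ 2)).mul_const
      ((cos ψ) ^ 2 - (sin ψ) ^ 2)).deriv
  have h2z := (((Real.hasDerivAt_cos θ).pow 2).const_mul
      (1 / 2 * Real.sqrt (ρ ^ 4 - ρ₀ ^ 4 / 3))).mul_const
      ((cos ψ) ^ 2 - (sin ψ) ^ 2) |>.deriv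
  have h3z := ((((Real.hasDerivAt_cos ψ).pow 2).sub ((Real.hasDerivAt_sin ψ).pow 2)).const_mul
      (1 / 2 * Real.sqrt (ρ ^ 4 - ρ₀ ^ 4 / 3) * (cos θ) ^ 2)).deriv
  simp only [Pi.mul_def, Pi.mul_apply, Pi.pow_apply, Pi.sub_apply] at h1r h2r h3r h1z h2z h3z
  simp only [pairingF, pd1, pd2, pd3]
  rw [h1r, h2r, h3r, h1z, h2z, h3z]
  set sf := Real.sqrt (1 - ρ₀ ^ 4 / ρ ^ 4) with hsfdef
  set sb := Real.sqrt (ρ ^ 4 - ρ₀ ^ 4 / 3) with hsbdef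
  have hsf2 : sf ^ 2 = 1 - ρ₀ ^ 4 / ρ ^ 4 := Real.sq_sqrt hf.le
  have hsb2 : sb ^ 2 = ρ ^ 4 - ρ₀ ^ 4 / 3 := Real.sq_sqrt hB.le
  have hst : sin θ ^ 2 = 1 - cos θ ^ 2 := Real.sin_sq θ
  have hsfpos : 0 < sf := Real.sqrt_pos.mpr hf
  have hsbpos : 0 < sb := Real.sqrt_pos.mpr hB
  have hsf2' : sf ^ 2 * ρ ^ 4 = ρ ^ 4 - ρ₀ ^ 4 := by
    rw [hsf2]; field_simp
  field_simp
  linear_combination (16 * (sin θ * sin ψ * cos ψ * (cos ψ ^ 2 - sin ψ ^ 2)) * ρ ^ 4 * sf ^ 2 * sb ^ 2 * cos θ ^ 2) * hst + (-16 * (sin θ * sin ψ * cos ψ * (cos ψ ^ 2 - sin ψ ^ 2)) * cos θ ^ 4 * ρ₀ ^ 4) * hsf2' + (-24 * (sin θ * sin ψ * cos ψ * (cos ψ ^ 2 - sin ψ ^ 2)) * cos θ ^ 4 * ρ ^ 4 * sf ^ 2) * hsb2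


private lemma aux2 (ρ₀ : ℝ) (hρ₀ : 0 < ρ₀) (ρ θ ψ : ℝ) (hρ : ρ₀ < ρ) (hθ1 : 0 < θ) (hθ2 : θ < π / 2)
    (hψ1 : 0 < ψ) (hψ2 : ψ < π / 2) :
      pairingF (fun ρ => 1 - ρ₀ ^ 4 / ρ ^ 4)
          (fun ρ θ ψ =>
            ρ ^ 3 * Real.sqrt (1 - ρ₀ ^ 4 / ρ ^ 4) * sin θ * (cos θ) ^ 2 * sin ψ * cos ψ)
          (fun ρ θ _ =>
            (1 / 4) * Real.sqrt (ρ ^ 4 - ρ₀ ^ 4 / 3) * (3 * (cos θ) ^ 2 - 2)) ρ θ ψ = 0 := by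
  have hρpos : 0 < ρ := hρ₀.trans hρ
  have hρ4 : (ρ:ℝ) ^ 4 ≠ 0 := by positivity
  have h4 : ρ₀ ^ 4 < ρ ^ 4 := pow_lt_pow_left₀ hρ hρ₀.le (by norm_num)
  have hf : 0 < 1 - ρ₀ ^ 4 / ρ ^ 4 := by
    rw [sub_pos, div_lt_one (by positivity)]; exact h4
  have hB : 0 < ρ ^ 4 - ρ₀ ^ 4 / 3 := by nlinarith [pow_pos hρ₀ 4]
  have hcθ : 0 < cos θ := Real.cos_pos_of_mem_Ioo ⟨by linarith [pi_pos], hθ2⟩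
  -- derivative of 1 - ρ₀^4/x^4
  have hg : HasDerivAt (fun x : ℝ => 1 - ρ₀ ^ 4 / x ^ 4)
      (0 - (0 * ρ ^ 4 - ρ₀ ^ 4 * (4 * ρ ^ 3)) / (ρ ^ 4) ^ 2) ρ :=
    (hasDerivAt_const ρ (1:ℝ)).sub
      ((hasDerivAt_const ρ (ρ₀ ^ 4)).div (by simpa using hasDerivAt_pow 4 ρ) hρ4)
  have hsf := hg.sqrt hf.ne'
  have hρ3 : HasDerivAt (fun x : ℝ => x ^ 3) (3 * ρ ^ 2) ρ := by
    simpa using hasDerivAt_pow 3 ρ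
  have hB' : HasDerivAt (fun x : ℝ => x ^ 4 - ρ₀ ^ 4 / 3) (4 * ρ ^ 3) ρ := by
    simpa using (hasDerivAt_pow 4 ρ).sub_const (ρ₀ ^ 4 / 3)
  have hsb := hB'.sqrt hB.ne'
  have h1r := (((((hρ3.mul hsf).mul_const (sin θ)).mul_const ((cos θ) ^ 2)).mul_const
      (sin ψ)).mul_const (cos ψ)).deriv
  have h2r := ((((Real.hasDerivAt_sin θ).const_mul
      (ρ ^ 3 * Real.sqrt (1 - ρ₀ ^ 4 / ρ ^ 4))).mul
      ((Real.hasDerivAt_cos θ).pow 2)).mul_const (sin ψ)).mul_const (cos ψ) |>.deriv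
  have h3r := (((Real.hasDerivAt_sin ψ).const_mul
      (ρ ^ 3 * Real.sqrt (1 - ρ₀ ^ 4 / ρ ^ 4) * sin θ * (cos θ) ^ 2)).mul
      (Real.hasDerivAt_cos ψ)).deriv
  have h1z := ((hsb.const_mul (1/4 : ℝ)).mul_const (3 * (cos θ) ^ 2 - 2)).deriv
  have h2z := ((((Real.hasDerivAt_cos θ).pow 2).const_mul (3:ℝ)).sub_const 2).const_mul
      (1 / 4 * Real.sqrt (ρ ^ 4 - ρ₀ ^ 4 / 3)) |>.deriv
  simp only [Pi.mul_def, Pi.mul_apply, Pi.pow_apply, Pi.sub_apply] at h1r h2r h3r h1z h2z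
  simp only [pairingF, pd1, pd2, pd3]
  rw [h1r, h2r, h3r, h1z, h2z, deriv_const]
  set sf := Real.sqrt (1 - ρ₀ ^ 4 / ρ ^ 4) with hsfdef
  set sb := Real.sqrt (ρ ^ 4 - ρ₀ ^ 4 / 3) with hsbdef
  have hsf2 : sf ^ 2 = 1 - ρ₀ ^ 4 / ρ ^ 4 := Real.sq_sqrt hf.le
  have hsb2 : sb ^ 2 = ρ ^ 4 - ρ₀ ^ 4 / 3 := Real.sq_sqrt hB.le
  have hst : sin θ ^ 2 = 1 - cos θ ^ 2 := Real.sin_sq θ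
  have hsfpos : 0 < sf := Real.sqrt_pos.mpr hf
  have hsbpos : 0 < sb := Real.sqrt_pos.mpr hB
  have hsf2' : sf ^ 2 * ρ ^ 4 = ρ ^ 4 - ρ₀ ^ 4 := by
    rw [hsf2]; field_simp
  field_simp
  linear_combination (48 * (sin θ * sin ψ * cos ψ) * ρ ^ 4 * sf ^ 2 * sb ^ 2 * cos θ ^ 2) * hst + (-16 * (sin θ * sin ψ * cos ψ) * cos θ ^ 2 * (3 * cos θ ^ 2 - 2) * ρ₀ ^ 4) * hsf2' + (-24 * (sin θ * sin ψ * cos ψ) * cos θ ^ 2 * (3 * cos θ ^ 2 - 2) * ρ ^ 4 * sf ^ 2) * hsb2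


private lemma aux3 (ρ₀ : ℝ) (hρ₀ : 0 < ρ₀) (ρ : ℝ) (hρ : ρ₀ < ρ) :
    deriv (fun ρ => Real.sqrt (ρ ^ 4 - ρ₀ ^ 4 / 3)) ρ / Real.sqrt (ρ ^ 4 - ρ₀ ^ 4 / 3)
      = 6 * ρ ^ 3 / (3 * ρ ^ 4 - ρ₀ ^ 4) := by
  have hρpos : 0 < ρ := hρ₀.trans hρ
  have h4 : ρ₀ ^ 4 < ρ ^ 4 := pow_lt_pow_left₀ hρ hρ₀.le (by norm_num)
  have hB : 0 < ρ ^ 4 - ρ₀ ^ 4 / 3 := by nlinarith [pow_pos hρ₀ 4]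
  have hB' : HasDerivAt (fun x : ℝ => x ^ 4 - ρ₀ ^ 4 / 3) (4 * ρ ^ 3) ρ := by
    simpa using (hasDerivAt_pow 4 ρ).sub_const (ρ₀ ^ 4 / 3)
  have hd := (hB'.sqrt hB.ne').deriv
  rw [hd]
  set sb := Real.sqrt (ρ ^ 4 - ρ₀ ^ 4 / 3) with hsbdef
  have hsb : sb ^ 2 = ρ ^ 4 - ρ₀ ^ 4 / 3 := Real.sq_sqrt hB.le
  have hsbpos : 0 < sb := Real.sqrt_pos.mpr hB
  have h3 : (3:ℝ) * ρ ^ 4 - ρ₀ ^ 4 ≠ 0 := by nlinarith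
  field_simp
  rw [eq_div_iff (by intro h; apply h3; linarith)]
  linear_combination (-12) * hsb

/-- Orthogonality `⟨∇r, ∇z^α⟩ = 0`, `α = 1,2`, for the canonical coordinates of the
seven-dimensional Schwarzschild–Tangherlini black hole, and the logarithmic derivative
identity `b′/b = 6ρ³/(3ρ⁴ − ρ₀⁴)` for the common radial profile `b(ρ) = √(ρ⁴ − ρ₀⁴/3)`. -/
theorem stmt_16 (ρ₀ : ℝ) (hρ₀ : 0 < ρ₀) :
    (∀ ρ θ ψ : ℝ, ρ₀ < ρ → 0 < θ → θ < π / 2 → 0 < ψ → ψ < π / 2 →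
      pairingF (fun ρ => 1 - ρ₀ ^ 4 / ρ ^ 4)
          (fun ρ θ ψ =>
            ρ ^ 3 * Real.sqrt (1 - ρ₀ ^ 4 / ρ ^ 4) * sin θ * (cos θ) ^ 2 * sin ψ * cos ψ)
          (fun ρ θ ψ =>
            (1 / 2) * Real.sqrt (ρ ^ 4 - ρ₀ ^ 4 / 3) * (cos θ) ^ 2 *
              ((cos ψ) ^ 2 - (sin ψ) ^ 2)) ρ θ ψ = 0 ∧
      pairingF (fun ρ => 1 - ρ₀ ^ 4 / ρ ^ 4)
          (fun ρ θ ψ =>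
            ρ ^ 3 * Real.sqrt (1 - ρ₀ ^ 4 / ρ ^ 4) * sin θ * (cos θ) ^ 2 * sin ψ * cos ψ)
          (fun ρ θ _ =>
            (1 / 4) * Real.sqrt (ρ ^ 4 - ρ₀ ^ 4 / 3) * (3 * (cos θ) ^ 2 - 2)) ρ θ ψ = 0) ∧
    (∀ ρ : ℝ, ρ₀ < ρ →
      deriv (fun ρ => Real.sqrt (ρ ^ 4 - ρ₀ ^ 4 / 3)) ρ / Real.sqrt (ρ ^ 4 - ρ₀ ^ 4 / 3)
        = 6 * ρ ^ 3 / (3 * ρ ^ 4 - ρ₀ ^ 4)) := by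
  refine ⟨fun ρ θ ψ hρ hθ1 hθ2 hψ1 hψ2 =>
    ⟨aux1 ρ₀ hρ₀ ρ θ ψ hρ hθ1 hθ2 hψ1 hψ2, aux2 ρ₀ hρ₀ ρ θ ψ hρ hθ1 hθ2 hψ1 hψ2⟩,
    fun ρ hρ => aux3 ρ₀ hρ₀ ρ hρ⟩
end

section
/- Let ρ > 0 and a₁, a₂, a₃, ρ₀, μ₁, μ₂, μ₃ ∈ ℝ. Set Π = (ρ² + a₁²)(ρ² + a₂²)(ρ² + a₃²) and F = 1 − Σ_{i=1}^{3} aᵢ²μᵢ²/(ρ² + aᵢ²), and assume F ≠ 0. Let G be the symmetric 4×4 real matrix with entries G₀₀ = −1 + ρ₀⁴ρ²/(ΠF), G₀ᵢ = Gᵢ₀ = −ρ₀⁴ρ² aᵢ μᵢ²/(ΠF) for i = 1, 2, 3, and Gᵢⱼ = (ρ² + aᵢ²) μᵢ² δᵢⱼ + ρ₀⁴ρ² aᵢ aⱼ μᵢ² μⱼ²/(ΠF) for i, j ∈ {1, 2, 3}. Then det G = −(Π − ρ² ρ₀⁴) μ₁² μ₂² μ₃². -/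
lemma det4_aux (k d₁ d₂ d₃ a₁ a₂ a₃ μ₁ μ₂ μ₃ : ℝ) :
    Matrix.det
      !![-1 + k, -(k * a₁ * μ₁ ^ 2), -(k * a₂ * μ₂ ^ 2), -(k * a₃ * μ₃ ^ 2);
         -(k * a₁ * μ₁ ^ 2), d₁ * μ₁ ^ 2 + k * a₁ * a₁ * μ₁ ^ 2 * μ₁ ^ 2,
           k * a₁ * a₂ * μ₁ ^ 2 * μ₂ ^ 2, k * a₁ * a₃ * μ₁ ^ 2 * μ₃ ^ 2;
         -(k * a₂ * μ₂ ^ 2), k * a₂ * a₁ * μ₂ ^ 2 * μ₁ ^ 2,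
           d₂ * μ₂ ^ 2 + k * a₂ * a₂ * μ₂ ^ 2 * μ₂ ^ 2, k * a₂ * a₃ * μ₂ ^ 2 * μ₃ ^ 2;
         -(k * a₃ * μ₃ ^ 2), k * a₃ * a₁ * μ₃ ^ 2 * μ₁ ^ 2, k * a₃ * a₂ * μ₃ ^ 2 * μ₂ ^ 2,
           d₃ * μ₃ ^ 2 + k * a₃ * a₃ * μ₃ ^ 2 * μ₃ ^ 2]
    = -(d₁ * d₂ * d₃) * μ₁ ^ 2 * μ₂ ^ 2 * μ₃ ^ 2
      + k * μ₁ ^ 2 * μ₂ ^ 2 * μ₃ ^ 2 * (d₁ * d₂ * d₃ - a₁ ^ 2 * μ₁ ^ 2 * d₂ * d₃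
        - a₂ ^ 2 * μ₂ ^ 2 * d₁ * d₃ - a₃ ^ 2 * μ₃ ^ 2 * d₁ * d₂) := by
  simp [Matrix.det_succ_row_zero, Fin.sum_univ_succ, Fin.succAbove]
  ring

set_option maxHeartbeats 1000000 in
/-- The determinant of the Killing metric `G_{ij}` of the seven-dimensional Myers–Perry
black hole on the Killing fields `∂_t, ∂_{φ₁}, ∂_{φ₂}, ∂_{φ₃}` equals
`−(Π − ρ²ρ₀⁴)μ₁²μ₂²μ₃²`, where `Π = (ρ²+a₁²)(ρ²+a₂²)(ρ²+a₃²)` and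
`F = 1 − Σᵢ aᵢ²μᵢ²/(ρ²+aᵢ²)`. -/
theorem stmt_17 (ρ a₁ a₂ a₃ ρ₀ μ₁ μ₂ μ₃ : ℝ) (hρ : 0 < ρ)
    (P F : ℝ)
    (hP : P = (ρ ^ 2 + a₁ ^ 2) * (ρ ^ 2 + a₂ ^ 2) * (ρ ^ 2 + a₃ ^ 2))
    (hF : F = 1 - a₁ ^ 2 * μ₁ ^ 2 / (ρ ^ 2 + a₁ ^ 2) - a₂ ^ 2 * μ₂ ^ 2 / (ρ ^ 2 + a₂ ^ 2)
      - a₃ ^ 2 * μ₃ ^ 2 / (ρ ^ 2 + a₃ ^ 2))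
    (hF0 : F ≠ 0) :
    Matrix.det
      !![-1 + ρ₀ ^ 4 * ρ ^ 2 / (P * F),
         -(ρ₀ ^ 4 * ρ ^ 2 * a₁ * μ₁ ^ 2) / (P * F),
         -(ρ₀ ^ 4 * ρ ^ 2 * a₂ * μ₂ ^ 2) / (P * F),
         -(ρ₀ ^ 4 * ρ ^ 2 * a₃ * μ₃ ^ 2) / (P * F);
         -(ρ₀ ^ 4 * ρ ^ 2 * a₁ * μ₁ ^ 2) / (P * F),
         (ρ ^ 2 + a₁ ^ 2) * μ₁ ^ 2 + ρ₀ ^ 4 * ρ ^ 2 * a₁ * a₁ * μ₁ ^ 2 * μ₁ ^ 2 / (P * F),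
         ρ₀ ^ 4 * ρ ^ 2 * a₁ * a₂ * μ₁ ^ 2 * μ₂ ^ 2 / (P * F),
         ρ₀ ^ 4 * ρ ^ 2 * a₁ * a₃ * μ₁ ^ 2 * μ₃ ^ 2 / (P * F);
         -(ρ₀ ^ 4 * ρ ^ 2 * a₂ * μ₂ ^ 2) / (P * F),
         ρ₀ ^ 4 * ρ ^ 2 * a₂ * a₁ * μ₂ ^ 2 * μ₁ ^ 2 / (P * F),
         (ρ ^ 2 + a₂ ^ 2) * μ₂ ^ 2 + ρ₀ ^ 4 * ρ ^ 2 * a₂ * a₂ * μ₂ ^ 2 * μ₂ ^ 2 / (P * F),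
         ρ₀ ^ 4 * ρ ^ 2 * a₂ * a₃ * μ₂ ^ 2 * μ₃ ^ 2 / (P * F);
         -(ρ₀ ^ 4 * ρ ^ 2 * a₃ * μ₃ ^ 2) / (P * F),
         ρ₀ ^ 4 * ρ ^ 2 * a₃ * a₁ * μ₃ ^ 2 * μ₁ ^ 2 / (P * F),
         ρ₀ ^ 4 * ρ ^ 2 * a₃ * a₂ * μ₃ ^ 2 * μ₂ ^ 2 / (P * F),
         (ρ ^ 2 + a₃ ^ 2) * μ₃ ^ 2 + ρ₀ ^ 4 * ρ ^ 2 * a₃ * a₃ * μ₃ ^ 2 * μ₃ ^ 2 / (P * F)]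
      = -(P - ρ ^ 2 * ρ₀ ^ 4) * μ₁ ^ 2 * μ₂ ^ 2 * μ₃ ^ 2 := by
  have h1 : (ρ ^ 2 + a₁ ^ 2) ≠ 0 := by positivity
  have h2 : (ρ ^ 2 + a₂ ^ 2) ≠ 0 := by positivity
  have h3 : (ρ ^ 2 + a₃ ^ 2) ≠ 0 := by positivity
  have hPne : P ≠ 0 := by rw [hP]; positivity
  have hPF : P * F ≠ 0 := mul_ne_zero hPne hF0
  have hF' : F * ((ρ ^ 2 + a₁ ^ 2) * (ρ ^ 2 + a₂ ^ 2) * (ρ ^ 2 + a₃ ^ 2))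
      = (ρ ^ 2 + a₁ ^ 2) * (ρ ^ 2 + a₂ ^ 2) * (ρ ^ 2 + a₃ ^ 2)
        - a₁ ^ 2 * μ₁ ^ 2 * ((ρ ^ 2 + a₂ ^ 2) * (ρ ^ 2 + a₃ ^ 2))
        - a₂ ^ 2 * μ₂ ^ 2 * ((ρ ^ 2 + a₁ ^ 2) * (ρ ^ 2 + a₃ ^ 2))
        - a₃ ^ 2 * μ₃ ^ 2 * ((ρ ^ 2 + a₁ ^ 2) * (ρ ^ 2 + a₂ ^ 2)) := by
    rw [hF]
    field_simp
  set k : ℝ := ρ₀ ^ 4 * ρ ^ 2 / (P * F) with hk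
  have hM : (!![-1 + ρ₀ ^ 4 * ρ ^ 2 / (P * F),
         -(ρ₀ ^ 4 * ρ ^ 2 * a₁ * μ₁ ^ 2) / (P * F),
         -(ρ₀ ^ 4 * ρ ^ 2 * a₂ * μ₂ ^ 2) / (P * F),
         -(ρ₀ ^ 4 * ρ ^ 2 * a₃ * μ₃ ^ 2) / (P * F);
         -(ρ₀ ^ 4 * ρ ^ 2 * a₁ * μ₁ ^ 2) / (P * F),
         (ρ ^ 2 + a₁ ^ 2) * μ₁ ^ 2 + ρ₀ ^ 4 * ρ ^ 2 * a₁ * a₁ * μ₁ ^ 2 * μ₁ ^ 2 / (P * F),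
         ρ₀ ^ 4 * ρ ^ 2 * a₁ * a₂ * μ₁ ^ 2 * μ₂ ^ 2 / (P * F),
         ρ₀ ^ 4 * ρ ^ 2 * a₁ * a₃ * μ₁ ^ 2 * μ₃ ^ 2 / (P * F);
         -(ρ₀ ^ 4 * ρ ^ 2 * a₂ * μ₂ ^ 2) / (P * F),
         ρ₀ ^ 4 * ρ ^ 2 * a₂ * a₁ * μ₂ ^ 2 * μ₁ ^ 2 / (P * F),
         (ρ ^ 2 + a₂ ^ 2) * μ₂ ^ 2 + ρ₀ ^ 4 * ρ ^ 2 * a₂ * a₂ * μ₂ ^ 2 * μ₂ ^ 2 / (P * F),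
         ρ₀ ^ 4 * ρ ^ 2 * a₂ * a₃ * μ₂ ^ 2 * μ₃ ^ 2 / (P * F);
         -(ρ₀ ^ 4 * ρ ^ 2 * a₃ * μ₃ ^ 2) / (P * F),
         ρ₀ ^ 4 * ρ ^ 2 * a₃ * a₁ * μ₃ ^ 2 * μ₁ ^ 2 / (P * F),
         ρ₀ ^ 4 * ρ ^ 2 * a₃ * a₂ * μ₃ ^ 2 * μ₂ ^ 2 / (P * F),
         (ρ ^ 2 + a₃ ^ 2) * μ₃ ^ 2 + ρ₀ ^ 4 * ρ ^ 2 * a₃ * a₃ * μ₃ ^ 2 * μ₃ ^ 2 / (P * F)])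
      = !![-1 + k, -(k * a₁ * μ₁ ^ 2), -(k * a₂ * μ₂ ^ 2), -(k * a₃ * μ₃ ^ 2);
         -(k * a₁ * μ₁ ^ 2), (ρ ^ 2 + a₁ ^ 2) * μ₁ ^ 2 + k * a₁ * a₁ * μ₁ ^ 2 * μ₁ ^ 2,
           k * a₁ * a₂ * μ₁ ^ 2 * μ₂ ^ 2, k * a₁ * a₃ * μ₁ ^ 2 * μ₃ ^ 2;
         -(k * a₂ * μ₂ ^ 2), k * a₂ * a₁ * μ₂ ^ 2 * μ₁ ^ 2,
           (ρ ^ 2 + a₂ ^ 2) * μ₂ ^ 2 + k * a₂ * a₂ * μ₂ ^ 2 * μ₂ ^ 2,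
           k * a₂ * a₃ * μ₂ ^ 2 * μ₃ ^ 2;
         -(k * a₃ * μ₃ ^ 2), k * a₃ * a₁ * μ₃ ^ 2 * μ₁ ^ 2, k * a₃ * a₂ * μ₃ ^ 2 * μ₂ ^ 2,
           (ρ ^ 2 + a₃ ^ 2) * μ₃ ^ 2 + k * a₃ * a₃ * μ₃ ^ 2 * μ₃ ^ 2] := by
    rw [hk]
    ext i j
    fin_cases i <;> fin_cases j <;>
      simp [Matrix.cons_val_zero, Matrix.cons_val_one] <;> ring
  rw [hM, det4_aux]
  rw [hk, hP]
  field_simp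
  linear_combination (-(μ₁ ^ 2 * μ₂ ^ 2 * μ₃ ^ 2 * ρ₀ ^ 4 * ρ ^ 2)) * hF'
end
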